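/- arXiv:1806.07982 — 3 statements merged into one kernel-verified Lean document; each statement's English description precedes it below -/
import Mathlib

section
/- Let f be holomorphic on the unit disk 𝔻 = {z ∈ ℂ : |z| < 1} with f'(z) ≠ 0 for all z ∈ 𝔻. If for every z ∈ 𝔻 one has Re(1 + z·f''(z)/f'(z)) ≥ (1/4)(1 − |z|²)·(2|Sf(z)| + |f''(z)/f'(z)|²), then f is injective on 𝔻 and f(𝔻) is a convex set. -/
open Complex Metric Set Real

noncomputable section SchwarzianAux

section Curve


variable {γ : ℝ → ℂ} {ψ ρ : ℝ → ℝ}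

private lemma s_hasDeriv
    (hγd : ∀ θ, HasDerivAt γ ((ρ θ : ℂ) * Complex.exp ((ψ θ : ℂ) * Complex.I)) θ)
    (θ0 θ : ℝ) :
    HasDerivAt (fun t => ((γ t - γ θ0) * Complex.exp (-(ψ θ0 : ℂ) * Complex.I)).im)
      (ρ θ * Real.sin (ψ θ - ψ θ0)) θ := by
  have h1 : HasDerivAt (fun t => (γ t - γ θ0) * Complex.exp (-(ψ θ0 : ℂ) * Complex.I))
      ((ρ θ : ℂ) * Complex.exp ((ψ θ : ℂ) * Complex.I) * Complex.exp (-(ψ θ0 : ℂ) * Complex.I)) θ :=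
    ((hγd θ).sub_const _).mul_const _
  have h2 := Complex.imCLM.hasFDerivAt.comp_hasDerivAt θ h1
  have h3 : ((ρ θ : ℂ) * Complex.exp ((ψ θ : ℂ) * Complex.I) *
      Complex.exp (-(ψ θ0 : ℂ) * Complex.I)).im = ρ θ * Real.sin (ψ θ - ψ θ0) := by
    rw [mul_assoc, ← Complex.exp_add]
    have h4 : (ψ θ : ℂ) * Complex.I + -(ψ θ0 : ℂ) * Complex.I = ((ψ θ - ψ θ0 : ℝ) : ℂ) * Complex.I := by
      push_cast; ring
    rw [h4]
    simp only [Complex.mul_im, Complex.ofReal_re, Complex.ofReal_im, Complex.exp_ofReal_mul_I_im, zero_mul, add_zero]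
  simpa only [Function.comp_def, Complex.imCLM_apply, h3] using h2

/-- Support-line property on one period. -/
private lemma support_Icc
    (hγd : ∀ θ, HasDerivAt γ ((ρ θ : ℂ) * Complex.exp ((ψ θ : ℂ) * Complex.I)) θ)
    (hρ : ∀ θ, 0 < ρ θ)
    (hψm : StrictMono ψ) (hψc : Continuous ψ)
    (hγp : ∀ θ, γ (θ + 2 * π) = γ θ) (hψp : ∀ θ, ψ (θ + 2 * π) = ψ θ + 2 * π)
    (θ0 : ℝ) : ∀ θ ∈ Icc θ0 (θ0 + 2 * π),
      0 ≤ ((γ θ - γ θ0) * Complex.exp (-(ψ θ0 : ℂ) * Complex.I)).im := by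
  set s : ℝ → ℝ := fun t => ((γ t - γ θ0) * Complex.exp (-(ψ θ0 : ℂ) * Complex.I)).im with hs
  have hsd : ∀ θ, HasDerivAt s (ρ θ * Real.sin (ψ θ - ψ θ0)) θ := s_hasDeriv hγd θ0
  have hscont : Continuous s := by
    exact continuous_iff_continuousAt.2 fun x => (hsd x).continuousAt
  have hle : θ0 ≤ θ0 + 2 * π := by have := Real.pi_pos; linarith
  -- find θ* with ψ θ* = ψ θ0 + π
  obtain ⟨t, htmem, ht⟩ : ∃ t ∈ Icc θ0 (θ0 + 2 * π), ψ t = ψ θ0 + π := by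
    have h1 : ψ θ0 + π ∈ Icc (ψ θ0) (ψ (θ0 + 2 * π)) := by
      rw [hψp]
      constructor <;> [linarith [Real.pi_pos]; linarith [Real.pi_pos]]
    exact intermediate_value_Icc hle hψc.continuousOn h1
  have hs0 : s θ0 = 0 := by simp [hs]
  have hsp : s (θ0 + 2 * π) = 0 := by simp [hs, hγp θ0]
  have hmono : MonotoneOn s (Icc θ0 t) := by
    apply monotoneOn_of_deriv_nonneg (convex_Icc _ _) hscont.continuousOn
      (fun x _ => (hsd x).differentiableAt.differentiableWithinAt)
    intro x hx
    rw [interior_Icc, mem_Ioo] at hx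
    rw [(hsd x).deriv]
    apply mul_nonneg (hρ x).le
    apply Real.sin_nonneg_of_nonneg_of_le_pi
    · have := hψm.monotone hx.1.le; linarith
    · have := hψm.monotone hx.2.le; linarith [ht]
  have hanti : AntitoneOn s (Icc t (θ0 + 2 * π)) := by
    apply antitoneOn_of_deriv_nonpos (convex_Icc _ _) hscont.continuousOn
      (fun x _ => (hsd x).differentiableAt.differentiableWithinAt)
    intro x hx
    rw [interior_Icc, mem_Ioo] at hx
    rw [(hsd x).deriv]
    apply mul_nonpos_of_nonneg_of_nonpos (hρ x).le
    have h5 : ψ θ0 + π ≤ ψ x := by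
      have := hψm.monotone hx.1.le; linarith [ht]
    have h6 : ψ x ≤ ψ θ0 + 2 * π := by
      have h7 := hψm.monotone hx.2.le; rw [hψp] at h7; linarith
    rw [← Real.sin_sub_two_pi]
    apply Real.sin_nonpos_of_nonpos_of_neg_pi_le <;> linarith
  intro θ hθ
  rcases le_total θ t with hc | hc
  · have := hmono (left_mem_Icc.2 htmem.1) ⟨hθ.1, hc⟩ hθ.1
    rwa [hs0] at this
  · have := hanti ⟨hc, hθ.2⟩ (right_mem_Icc.2 htmem.2) hθ.2
    rwa [hsp] at this

/-- Support-line property, global. -/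
private lemma support_global
    (hγd : ∀ θ, HasDerivAt γ ((ρ θ : ℂ) * Complex.exp ((ψ θ : ℂ) * Complex.I)) θ)
    (hρ : ∀ θ, 0 < ρ θ)
    (hψm : StrictMono ψ) (hψc : Continuous ψ)
    (hγp : ∀ θ, γ (θ + 2 * π) = γ θ) (hψp : ∀ θ, ψ (θ + 2 * π) = ψ θ + 2 * π)
    (θ0 θ : ℝ) : 0 ≤ ((γ θ - γ θ0) * Complex.exp (-(ψ θ0 : ℂ) * Complex.I)).im := by
  have h2π : (0:ℝ) < 2 * π := by positivity
  set θ' := toIcoMod h2π θ0 θ with hθ'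
  have hmem : θ' ∈ Icc θ0 (θ0 + 2 * π) := Ico_subset_Icc_self (toIcoMod_mem_Ico h2π θ0 θ)
  have hγper : Function.Periodic γ (2 * π) := hγp
  have hγeq : γ θ' = γ θ := by
    have : θ' = θ - toIcoDiv h2π θ0 θ • (2 * π) := by
      rw [hθ', toIcoMod]
    rw [this, hγper.sub_zsmul_eq]
  have := support_Icc hγd hρ hψm hψc hγp hψp θ0 θ' hmem
  rwa [hγeq] at this

/-- The curve is simple: core case. -/
private lemma inj_core
    (hγd : ∀ θ, HasDerivAt γ ((ρ θ : ℂ) * Complex.exp ((ψ θ : ℂ) * Complex.I)) θ)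
    (hρ : ∀ θ, 0 < ρ θ) (hρc : Continuous ρ)
    (hψm : StrictMono ψ) (hψc : Continuous ψ)
    {θ1 θ2 : ℝ} (hlt : θ1 < θ2) (hle : ψ θ2 ≤ ψ θ1 + π) : γ θ1 ≠ γ θ2 := by
  intro heq
  set s : ℝ → ℝ := fun t => ((γ t - γ θ1) * Complex.exp (-(ψ θ1 : ℂ) * Complex.I)).im with hs
  have hsd : ∀ θ, HasDerivAt s (ρ θ * Real.sin (ψ θ - ψ θ1)) θ := s_hasDeriv hγd θ1
  have hcont : Continuous fun t => ρ t * Real.sin (ψ t - ψ θ1) :=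
    hρc.mul ((Real.continuous_sin).comp (hψc.sub continuous_const))
  have hint : IntervalIntegrable (fun t => ρ t * Real.sin (ψ t - ψ θ1)) MeasureTheory.volume θ1 θ2 :=
    hcont.intervalIntegrable _ _
  have hftc : ∫ t in θ1..θ2, ρ t * Real.sin (ψ t - ψ θ1) = s θ2 - s θ1 :=
    intervalIntegral.integral_eq_sub_of_hasDerivAt (fun t _ => hsd t) hint
  have hval : s θ2 - s θ1 = 0 := by simp [hs, ← heq]
  have hpos : 0 < ∫ t in θ1..θ2, ρ t * Real.sin (ψ t - ψ θ1) := by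
    apply intervalIntegral.intervalIntegral_pos_of_pos_on hint _ hlt
    intro x hx
    apply mul_pos (hρ x)
    apply Real.sin_pos_of_pos_of_lt_pi
    · have := hψm hx.1; linarith
    · have := hψm hx.2; linarith
  rw [hftc, hval] at hpos
  exact lt_irrefl _ hpos

/-- The curve is simple. -/
private lemma curve_inj
    (hγd : ∀ θ, HasDerivAt γ ((ρ θ : ℂ) * Complex.exp ((ψ θ : ℂ) * Complex.I)) θ)
    (hρ : ∀ θ, 0 < ρ θ) (hρc : Continuous ρ)
    (hψm : StrictMono ψ) (hψc : Continuous ψ)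
    (hγp : ∀ θ, γ (θ + 2 * π) = γ θ) (hψp : ∀ θ, ψ (θ + 2 * π) = ψ θ + 2 * π)
    {θ1 θ2 : ℝ} (h1 : θ1 < θ2) (h2 : θ2 < θ1 + 2 * π) : γ θ1 ≠ γ θ2 := by
  by_cases hc : ψ θ2 ≤ ψ θ1 + π
  · exact inj_core hγd hρ hρc hψm hψc h1 hc
  · intro heq
    push_neg at hc
    have h3 : ψ (θ1 + 2 * π) ≤ ψ θ2 + π := by rw [hψp]; linarith
    exact inj_core hγd hρ hρc hψm hψc h2 h3 (by rw [hγp]; exact heq.symm)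


end Curve

section Analytic

variable {f : ℂ → ℂ}


variable {f : ℂ → ℂ}

private lemma re_p_pos
    (hf : DifferentiableOn ℂ f (ball (0 : ℂ) 1))
    (hf' : ∀ z ∈ ball (0 : ℂ) 1, deriv f z ≠ 0)
    (hRe0 : ∀ z ∈ ball (0 : ℂ) 1,
      0 ≤ (1 + z * (deriv (deriv f) z / deriv f z)).re) :
    ∀ z ∈ ball (0 : ℂ) 1, 0 < (1 + z * (deriv (deriv f) z / deriv f z)).re := by
  set p : ℂ → ℂ := fun z => 1 + z * (deriv (deriv f) z / deriv f z) with hp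
  have hf1 : AnalyticOnNhd ℂ f (ball (0 : ℂ) 1) := hf.analyticOnNhd isOpen_ball
  have hd1 : AnalyticOnNhd ℂ (deriv f) (ball (0 : ℂ) 1) := hf1.deriv
  have hd2 : AnalyticOnNhd ℂ (deriv (deriv f)) (ball (0 : ℂ) 1) := hd1.deriv
  have hpdiff : DifferentiableOn ℂ p (ball (0 : ℂ) 1) := by
    apply (differentiableOn_const _).add
    exact differentiableOn_id.mul ((hd2.differentiableOn).div hd1.differentiableOn hf')
  intro z hz
  rcases lt_or_eq_of_le (hRe0 z hz) with h | h
  · exact h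
  · exfalso
    set g : ℂ → ℂ := fun w => Complex.exp (-(p w)) with hg
    have hgd : DifferentiableOn ℂ g (ball (0 : ℂ) 1) := hpdiff.neg.cexp
    have hmax : IsMaxOn (norm ∘ g) (ball (0 : ℂ) 1) z := by
      intro w hw
      simp only [Set.mem_setOf_eq, Function.comp_apply, hg, Complex.norm_exp,
        Complex.neg_re]
      exact Real.exp_le_exp.2 (by have := hRe0 w hw; linarith [h.symm ▸ le_refl (0:ℝ)])
    have heq := Complex.eqOn_of_isPreconnected_of_isMaxOn_norm
      (convex_ball (0 : ℂ) 1).isPreconnected isOpen_ball hgd hz hmax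
    have h0 : g 0 = g z := heq (mem_ball_self one_pos)
    have hv0 : ‖g 0‖ = Real.exp (-1) := by
      simp [hg, Complex.norm_exp, hp]
    have hvz : ‖g z‖ = 1 := by
      simp only [hg, Complex.norm_exp, Complex.neg_re]
      rw [← h]
      simp
    rw [h0, hvz] at hv0
    have h2 := Real.exp_lt_exp.2 (show (-1 : ℝ) < 0 by norm_num)
    rw [Real.exp_zero, ← hv0] at h2
    exact lt_irrefl _ h2


end Analytic

section Analytic2

variable {f : ℂ → ℂ}


private lemma curve_data
    (hf : DifferentiableOn ℂ f (ball (0 : ℂ) 1))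
    (hf' : ∀ z ∈ ball (0 : ℂ) 1, deriv f z ≠ 0)
    (hpos : ∀ z ∈ ball (0 : ℂ) 1,
      0 < (1 + z * (deriv (deriv f) z / deriv f z)).re)
    {r : ℝ} (hr0 : 0 < r) (hr1 : r < 1) :
    ∃ ψ ρ : ℝ → ℝ,
      (∀ θ, HasDerivAt (fun t => f (circleMap 0 r t))
        ((ρ θ : ℂ) * Complex.exp ((ψ θ : ℂ) * Complex.I)) θ) ∧
      (∀ θ, 0 < ρ θ) ∧ Continuous ρ ∧ StrictMono ψ ∧ Continuous ψ ∧
      (∀ θ, ψ (θ + 2 * π) = ψ θ + 2 * π) := by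
  set p : ℂ → ℂ := fun z => 1 + z * (deriv (deriv f) z / deriv f z) with hp
  have hf1 : AnalyticOnNhd ℂ f (ball (0 : ℂ) 1) := hf.analyticOnNhd isOpen_ball
  have hd1 : AnalyticOnNhd ℂ (deriv f) (ball (0 : ℂ) 1) := hf1.deriv
  have hd2 : AnalyticOnNhd ℂ (deriv (deriv f)) (ball (0 : ℂ) 1) := hd1.deriv
  have hpdiff : DifferentiableOn ℂ p (ball (0 : ℂ) 1) := by
    apply (differentiableOn_const _).add
    exact differentiableOn_id.mul ((hd2.differentiableOn).div hd1.differentiableOn hf')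
  have hpcont : ContinuousOn p (ball (0 : ℂ) 1) := hpdiff.continuousOn
  have hcm_mem : ∀ θ, circleMap 0 r θ ∈ ball (0 : ℂ) 1 := by
    intro θ
    rw [mem_ball_zero_iff, norm_circleMap_zero, abs_of_pos hr0]
    exact hr1
  set q : ℝ → ℂ := fun θ => p (circleMap 0 r θ) with hq
  have hq_cont : Continuous q := hpcont.comp_continuous (continuous_circleMap 0 r) hcm_mem
  set G : ℝ → ℂ := fun θ => deriv f (circleMap 0 r θ) * (circleMap 0 r θ * Complex.I) with hG
  have hγd : ∀ θ, HasDerivAt (fun t => f (circleMap 0 r t)) (G θ) θ := by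
    intro θ
    have h1 : HasDerivAt f (deriv f (circleMap 0 r θ)) (circleMap 0 r θ) :=
      (hf.differentiableAt (isOpen_ball.mem_nhds (hcm_mem θ))).hasDerivAt
    exact HasDerivAt.comp θ h1 (hasDerivAt_circleMap 0 r θ)
  have hGd : ∀ θ, HasDerivAt G (G θ * (Complex.I * q θ)) θ := by
    intro θ
    have h1 : HasDerivAt (deriv f) (deriv (deriv f) (circleMap 0 r θ)) (circleMap 0 r θ) :=
      ((hd1 _ (hcm_mem θ)).differentiableAt).hasDerivAt
    have hu : HasDerivAt (fun t => deriv f (circleMap 0 r t))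
        (deriv (deriv f) (circleMap 0 r θ) * (circleMap 0 r θ * Complex.I)) θ :=
      HasDerivAt.comp θ h1 (hasDerivAt_circleMap 0 r θ)
    have hv : HasDerivAt (fun t => circleMap 0 r t * Complex.I)
        ((circleMap 0 r θ * Complex.I) * Complex.I) θ :=
      (hasDerivAt_circleMap 0 r θ).mul_const Complex.I
    have key : deriv (deriv f) (circleMap 0 r θ) * (circleMap 0 r θ * Complex.I) *
        (circleMap 0 r θ * Complex.I) + deriv f (circleMap 0 r θ) *
        ((circleMap 0 r θ * Complex.I) * Complex.I) = G θ * (Complex.I * q θ) := by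
      have hne : deriv f (circleMap 0 r θ) ≠ 0 := hf' _ (hcm_mem θ)
      simp only [hG, hq, hp]
      field_simp
      ring
    exact key ▸ (hu.mul hv)
  -- the primitive of I * q
  set W : ℝ → ℂ := fun θ => ∫ t in (0:ℝ)..θ, Complex.I * q t with hW
  have hWd : ∀ θ, HasDerivAt W (Complex.I * q θ) θ := fun θ =>
    ((continuous_const.mul hq_cont).integral_hasStrictDerivAt 0 θ).hasDerivAt
  -- G θ * exp (-W θ) is constant
  have hconst : ∀ θ, G θ * Complex.exp (-W θ) = G 0 := by
    have hFd : ∀ θ, HasDerivAt (fun t => G t * Complex.exp (-W t)) 0 θ := by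
      intro θ
      have h2 : HasDerivAt (fun t => Complex.exp (-W t))
          (Complex.exp (-W θ) * (-(Complex.I * q θ))) θ := (hWd θ).neg.cexp
      have h3 := (hGd θ).mul h2
      have : G θ * (Complex.I * q θ) * Complex.exp (-W θ) +
          G θ * (Complex.exp (-W θ) * -(Complex.I * q θ)) = 0 := by ring
      exact this ▸ h3
    have hdiff : Differentiable ℝ (fun t => G t * Complex.exp (-W t)) :=
      fun x => (hFd x).differentiableAt
    intro θ
    have := is_const_of_deriv_eq_zero hdiff (fun x => (hFd x).deriv) θ 0
    simpa [hW, intervalIntegral.integral_same] using this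
  have hG0ne : G 0 ≠ 0 := by
    have h0 : circleMap 0 r 0 = (r : ℂ) := by simp [circleMap]
    rw [hG]
    simp only [h0]
    exact mul_ne_zero (hf' _ (by rw [← h0]; exact hcm_mem 0))
      (mul_ne_zero (by exact_mod_cast hr0.ne') Complex.I_ne_zero)
  have hGeq : ∀ θ, G θ = G 0 * Complex.exp (W θ) := by
    intro θ
    have h1 := hconst θ
    have h2 : Complex.exp (-W θ) * Complex.exp (W θ) = 1 := by
      rw [← Complex.exp_add]; simp
    calc G θ = G θ * (Complex.exp (-W θ) * Complex.exp (W θ)) := by rw [h2, mul_one]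
    _ = (G θ * Complex.exp (-W θ)) * Complex.exp (W θ) := by ring
    _ = G 0 * Complex.exp (W θ) := by rw [h1]
  -- split W into real and imaginary parts
  set X : ℝ → ℝ := fun θ => ∫ t in (0:ℝ)..θ, (q t).re with hX
  set Y : ℝ → ℝ := fun θ => ∫ t in (0:ℝ)..θ, (q t).im with hY
  have hqre_cont : Continuous fun t => (q t).re := Complex.continuous_re.comp hq_cont
  have hqim_cont : Continuous fun t => (q t).im := Complex.continuous_im.comp hq_cont
  have hQsplit : ∀ θ, ∫ t in (0:ℝ)..θ, q t = (X θ : ℂ) + (Y θ : ℂ) * Complex.I := by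
    intro θ
    have h1 : ∀ t, q t = ((q t).re : ℂ) + ((q t).im : ℂ) * Complex.I := by
      intro t; exact (Complex.re_add_im (q t)).symm
    have i1 : IntervalIntegrable (fun t => ((q t).re : ℂ)) MeasureTheory.volume 0 θ :=
      Continuous.intervalIntegrable (by fun_prop) _ _
    have i2 : IntervalIntegrable (fun t => ((q t).im : ℂ) * Complex.I) MeasureTheory.volume 0 θ :=
      Continuous.intervalIntegrable (by fun_prop) _ _
    rw [intervalIntegral.integral_congr (fun t _ => h1 t)]
    rw [intervalIntegral.integral_add i1 i2]
    rw [intervalIntegral.integral_mul_const]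
    rw [intervalIntegral.integral_ofReal, intervalIntegral.integral_ofReal]
  have hWsplit : ∀ θ, W θ = (X θ : ℂ) * Complex.I - Y θ := by
    intro θ
    rw [hW]
    simp only
    rw [intervalIntegral.integral_const_mul, hQsplit θ]
    ring_nf
    rw [Complex.I_sq]
    ring
  -- mean value: X (2π) = 2π
  have hmean : X (2 * π) = 2 * π := by
    have hdc : DiffContOnCl ℂ p (ball (0:ℂ) r) := by
      constructor
      · exact hpdiff.mono (ball_subset_ball hr1.le)
      · rw [closure_ball (0:ℂ) hr0.ne']
        exact hpcont.mono (closedBall_subset_ball hr1)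
    have hCIF := hdc.circleIntegral_sub_inv_smul (mem_ball_self hr0)
    have h2 : (∮ z in C(0, r), (z - 0)⁻¹ • p z) = ∫ t in (0:ℝ)..(2*π), Complex.I * q t := by
      rw [circleIntegral]
      apply intervalIntegral.integral_congr
      intro t _
      have hne : circleMap 0 r t ≠ 0 := circleMap_ne_center hr0.ne'
      simp only [deriv_circleMap, smul_eq_mul, sub_zero]
      field_simp
      ring
    rw [h2] at hCIF
    rw [intervalIntegral.integral_const_mul] at hCIF
    have hp0 : p 0 = 1 := by simp [hp]
    rw [hp0] at hCIF
    have h4 : (∫ t in (0:ℝ)..(2*π), q t) = 2 * (π:ℂ) := by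
      apply mul_left_cancel₀ Complex.I_ne_zero
      rw [hCIF, smul_eq_mul, mul_one]
      ring
    rw [hQsplit] at h4
    have h5 := congrArg Complex.re h4
    simpa using h5
  have hXd : ∀ θ, HasDerivAt X ((q θ).re) θ := fun θ =>
    (hqre_cont.integral_hasStrictDerivAt 0 θ).hasDerivAt
  have hYd : ∀ θ, HasDerivAt Y ((q θ).im) θ := fun θ =>
    (hqim_cont.integral_hasStrictDerivAt 0 θ).hasDerivAt
  have hqper : ∀ θ, q (θ + 2 * π) = q θ := fun θ =>
    congrArg p (periodic_circleMap 0 r θ)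
  have hXper : ∀ θ, X (θ + 2 * π) = X θ + 2 * π := by
    intro θ
    have hper : Function.Periodic (fun t => (q t).re) (2 * π) := fun t => by
      simp only [hqper t]
    have h5 : X (θ + 2*π) = X θ + ∫ t in θ..(θ + 2*π), (q t).re := by
      rw [hX]
      simp only
      rw [← intervalIntegral.integral_add_adjacent_intervals
        (hqre_cont.intervalIntegrable 0 θ) (hqre_cont.intervalIntegrable θ (θ+2*π))]
    have h6 := hper.intervalIntegral_add_eq θ 0
    rw [h6] at h5
    have h7 : (0:ℝ) + 2*π = 2*π := by ring
    rw [h7] at h5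
    have h8 : ∫ t in (0:ℝ)..(2*π), (q t).re = X (2*π) := rfl
    rw [h8, hmean] at h5
    exact h5
  set a0 : ℝ := ‖G 0‖ with ha0
  set c0 : ℝ := Complex.arg (G 0) with hc0
  have hG0 : G 0 = (a0:ℂ) * Complex.exp ((c0:ℂ) * Complex.I) :=
    (Complex.norm_mul_exp_arg_mul_I (G 0)).symm
  have ha0pos : 0 < a0 := norm_pos_iff.mpr hG0ne
  have hYcont : Continuous Y := continuous_iff_continuousAt.2 fun θ => (hYd θ).continuousAt
  have hXcont : Continuous X := continuous_iff_continuousAt.2 fun θ => (hXd θ).continuousAt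
  refine ⟨fun θ => c0 + X θ, fun θ => a0 * Real.exp (-Y θ), ?_, ?_, ?_, ?_, ?_, ?_⟩
  · intro θ
    have hval : ((a0 * Real.exp (-Y θ) : ℝ) : ℂ) *
        Complex.exp (((c0 + X θ : ℝ) : ℂ) * Complex.I) = G θ := by
      rw [hGeq θ, hWsplit θ, hG0]
      rw [Complex.ofReal_mul, Complex.ofReal_exp, Complex.ofReal_neg, Complex.ofReal_add]
      rw [mul_assoc, mul_assoc, ← Complex.exp_add, ← Complex.exp_add]
      congr 1
      ring
    exact hval ▸ (hγd θ)
  · intro θ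
    exact mul_pos ha0pos (Real.exp_pos _)
  · exact continuous_const.mul (Real.continuous_exp.comp hYcont.neg)
  · apply strictMono_of_deriv_pos
    intro θ
    rw [((hXd θ).const_add c0).deriv]
    exact hpos _ (hcm_mem θ)
  · exact continuous_const.add hXcont
  · intro θ
    show c0 + X (θ + 2 * π) = c0 + X θ + 2 * π
    rw [hXper θ]
    ring


end Analytic2

section Geo

variable {f : ℂ → ℂ} {ψ ρ : ℝ → ℝ} {r : ℝ}


variable {f : ℂ → ℂ} {ψ ρ : ℝ → ℝ} {r : ℝ}

-- the halfspace trick : every curve point fails to be interior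
private lemma not_interior
    (hsupp : ∀ θ0 θ, 0 ≤ ((f (circleMap 0 r θ) - f (circleMap 0 r θ0)) *
      Complex.exp (-(ψ θ0 : ℂ) * Complex.I)).im)
    (hr0 : 0 < r)
    (θ0 : ℝ) :
    f (circleMap 0 r θ0) ∉ interior (closure (convexHull ℝ (f '' sphere (0:ℂ) r))) := by
  intro hint
  set E : ℂ := Complex.exp (-(ψ θ0 : ℂ) * Complex.I) with hE
  set L : ℂ → ℝ := fun y => (y * E).im with hL
  have hLlin : IsLinearMap ℝ L := by
    constructor
    · intro a b; simp only [hL, add_mul, Complex.add_im]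
    · intro c a
      simp only [hL, Complex.real_smul, smul_eq_mul]
      rw [mul_assoc]
      simp [Complex.mul_im]
  set x := f (circleMap 0 r θ0) with hx
  have hH : closure (convexHull ℝ (f '' sphere (0:ℂ) r)) ⊆ {y | L x ≤ L y} := by
    apply closure_minimal
    apply convexHull_min _ (convex_halfSpace_ge hLlin (L x))
    rintro _ ⟨z, hz, rfl⟩
    -- z on the sphere: z = circleMap 0 r θ for some θ
    obtain ⟨θ, hθ⟩ : ∃ θ, circleMap 0 r θ = z := by
      have : z ∈ Set.range (circleMap 0 r) := by
        rw [range_circleMap, abs_of_pos hr0]; exact hz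
      exact this
    have h1 := hsupp θ0 θ
    rw [hθ] at h1
    have h2 : (f z * E).im - (f (circleMap 0 r θ0) * E).im =
        ((f z - f (circleMap 0 r θ0)) * E).im := by
      rw [sub_mul, Complex.sub_im]
    simp only [mem_setOf_eq, hL, hx]
    linarith [h2 ▸ h1]
    · exact isClosed_le continuous_const (by
        have : Continuous L := by
          simp only [hL]
          exact Complex.continuous_im.comp (continuous_id.mul continuous_const)
        exact this)
  obtain ⟨ε, hε, hball⟩ := Metric.mem_nhds_iff.1 (mem_interior_iff_mem_nhds.1 hint)
  set y := x - (ε/2 : ℝ) • (Complex.I * Complex.exp ((ψ θ0 : ℝ) * Complex.I)) with hy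
  have hymem : y ∈ ball x ε := by
    rw [mem_ball, dist_eq_norm, hy]
    have : x - (ε/2 : ℝ) • (Complex.I * Complex.exp ((ψ θ0 : ℝ) * Complex.I)) - x =
        -((ε/2 : ℝ) • (Complex.I * Complex.exp ((ψ θ0 : ℝ) * Complex.I))) := by ring_nf
    rw [this, norm_neg, norm_smul]
    simp only [norm_mul, Complex.norm_I, Complex.norm_exp_ofReal_mul_I,
      one_mul, mul_one]
    rw [Real.norm_eq_abs, abs_of_pos (by linarith)]
    linarith
  have hyK := hH (hball hymem)
  simp only [mem_setOf_eq] at hyK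
  have hcomp : L y = L x - ε/2 := by
    simp only [hL, hy]
    rw [sub_mul, Complex.sub_im]
    have h3 : ((ε/2 : ℝ) • (Complex.I * Complex.exp ((ψ θ0 : ℝ) * Complex.I)) * E).im = ε/2 := by
      rw [hE, Complex.real_smul]
      have h4 : (((ε/2 : ℝ)) : ℂ) * (Complex.I * Complex.exp ((ψ θ0 : ℝ) * Complex.I)) *
          Complex.exp (-(ψ θ0 : ℂ) * Complex.I) =
          ((ε/2 : ℝ) : ℂ) * Complex.I * Complex.exp ((ψ θ0 : ℝ) * Complex.I + -(ψ θ0 : ℂ) * Complex.I) := by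
        rw [Complex.exp_add]; ring
      rw [h4]
      have h5 : ((ψ θ0 : ℝ) : ℂ) * Complex.I + -(ψ θ0 : ℂ) * Complex.I = 0 := by ring
      rw [h5, Complex.exp_zero, mul_one]
      simp [Complex.mul_im]
    rw [h3]
  rw [hcomp] at hyK
  linarith


end Geo

section Geo2

variable {f : ℂ → ℂ} {r : ℝ}


/-- Maximum principle: the image of the closed ball is contained in every
closed convex set containing the image of the sphere; we use the closed convex hull. -/
private lemma image_closedBall_subset
    (hf : DifferentiableOn ℂ f (ball (0 : ℂ) 1))
    (hr0 : 0 < r) (hr1 : r < 1) :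
    f '' closedBall (0:ℂ) r ⊆ closure (convexHull ℝ (f '' sphere (0:ℂ) r)) := by
  set K := closure (convexHull ℝ (f '' sphere (0:ℂ) r)) with hK
  have hKconv : Convex ℝ K := (convex_convexHull ℝ _).closure
  have hKclosed : IsClosed K := isClosed_closure
  rintro _ ⟨z, hz, rfl⟩
  by_contra hnot
  obtain ⟨g, c, hgK, hgw⟩ := geometric_hahn_banach_closed_point hKconv hKclosed hnot
  set b : ℂ := (g 1 : ℝ) - (g Complex.I : ℝ) * Complex.I with hb
  have hgb : ∀ y : ℂ, (b * y).re = g y := by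
    intro y
    have hy : y = y.re • (1:ℂ) + y.im • Complex.I := by
      simp [Complex.real_smul, Complex.re_add_im]
    have hbre : b.re = g 1 := by simp [hb]
    have hbim : b.im = -(g Complex.I) := by simp [hb]
    calc (b * y).re = g 1 * y.re + g Complex.I * y.im := by
          rw [Complex.mul_re, hbre, hbim]; ring
    _ = g y := by
          conv_rhs => rw [hy]
          rw [map_add, map_smul, map_smul]
          simp [smul_eq_mul]
          ring
  have hdF : DiffContOnCl ℂ (fun w => Complex.exp (b * f w)) (ball (0:ℂ) r) := by
    constructor
    · exact ((hf.mono (ball_subset_ball hr1.le)).const_mul b).cexp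
    · rw [closure_ball (0:ℂ) hr0.ne']
      exact (((hf.continuousOn.mono (closedBall_subset_ball hr1)).const_smul b).cexp)
  have hfront : ∀ w ∈ frontier (ball (0:ℂ) r), ‖Complex.exp (b * f w)‖ ≤ Real.exp c := by
    intro w hw
    rw [frontier_ball (0:ℂ) hr0.ne'] at hw
    have hfwK : f w ∈ K := subset_closure (subset_convexHull ℝ _ (mem_image_of_mem f hw))
    rw [Complex.norm_exp]
    exact Real.exp_le_exp.2 (le_of_lt (by rw [hgb]; exact hgK _ hfwK))
  have hzcl : z ∈ closure (ball (0:ℂ) r) := by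
    rw [closure_ball (0:ℂ) hr0.ne']; exact hz
  have key := Complex.norm_le_of_forall_mem_frontier_norm_le isBounded_ball hdF hfront hzcl
  rw [Complex.norm_exp, hgb] at key
  have := Real.exp_le_exp.1 key
  linarith

/-- open mapping consequence -/
private lemma image_ball_open
    (hf : DifferentiableOn ℂ f (ball (0 : ℂ) 1))
    (hf' : ∀ z ∈ ball (0 : ℂ) 1, deriv f z ≠ 0)
    (hr1 : r < 1) :
    IsOpen (f '' ball (0:ℂ) r) := by
  rw [isOpen_iff_mem_nhds]
  rintro _ ⟨z, hz, rfl⟩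
  have hz1 : z ∈ ball (0:ℂ) 1 := ball_subset_ball hr1.le hz
  have hza : AnalyticAt ℂ f z := (hf.analyticOnNhd isOpen_ball) z hz1
  rcases hza.eventually_constant_or_nhds_le_map_nhds with hconst | hle
  · exfalso
    have hev : f =ᶠ[nhds z] (fun _ => f z) := hconst
    have hd := hev.deriv_eq
    rw [deriv_const] at hd
    exact hf' z hz1 hd
  · exact hle (Filter.image_mem_map (isOpen_ball.mem_nhds hz))


end Geo2

section Geo3

variable {f : ℂ → ℂ} {r : ℝ}


private lemma image_ball_eq_interior
    (hr0 : 0 < r)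
    (hfc : ContinuousOn f (closedBall (0:ℂ) r))
    (hopen : IsOpen (f '' ball (0:ℂ) r))
    (hsubK : f '' closedBall (0:ℂ) r ⊆ closure (convexHull ℝ (f '' sphere (0:ℂ) r)))
    (hnotint : ∀ x ∈ f '' sphere (0:ℂ) r,
      x ∉ interior (closure (convexHull ℝ (f '' sphere (0:ℂ) r)))) :
    f '' ball (0:ℂ) r = interior (closure (convexHull ℝ (f '' sphere (0:ℂ) r))) := by
  set K := closure (convexHull ℝ (f '' sphere (0:ℂ) r)) with hK
  have hVsub : f '' ball (0:ℂ) r ⊆ interior K :=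
    hopen.subset_interior_iff.2 ((image_mono (f := f) ball_subset_closedBall).trans hsubK)
  set Wst := interior K \ f '' closedBall (0:ℂ) r with hWst
  have hWopen : IsOpen Wst :=
    isOpen_interior.sdiff ((isCompact_closedBall (0:ℂ) r).image_of_continuousOn hfc).isClosed
  have hcover : interior K ⊆ (f '' ball (0:ℂ) r) ∪ Wst := by
    intro w hw
    by_cases hmem : w ∈ f '' closedBall (0:ℂ) r
    · left
      obtain ⟨z, hz, rfl⟩ := hmem
      rw [mem_closedBall, dist_zero_right] at hz
      rcases lt_or_eq_of_le hz with h | h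
      · exact mem_image_of_mem f (by rwa [mem_ball, dist_zero_right])
      · exfalso
        exact hnotint (f z) (mem_image_of_mem f (by rwa [mem_sphere, dist_zero_right])) hw
    · right; exact ⟨hw, hmem⟩
  have hWempty : Wst = ∅ := by
    by_contra hne
    obtain ⟨w, hw⟩ := Set.nonempty_iff_ne_empty.2 hne
    have hpc : IsPreconnected (interior K) :=
      ((convex_convexHull ℝ _).closure.interior).isPreconnected
    have h1 : (interior K ∩ (f '' ball (0:ℂ) r)).Nonempty := by
      refine ⟨f 0, ?_, mem_image_of_mem f (mem_ball_self hr0)⟩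
      exact hVsub (mem_image_of_mem f (mem_ball_self hr0))
    have h2 : (interior K ∩ Wst).Nonempty := ⟨w, hw.1, hw⟩
    obtain ⟨v, hv⟩ := hpc _ _ hopen hWopen hcover h1 h2
    exact hv.2.2.2 (image_mono (f := f) ball_subset_closedBall hv.2.1)
  apply subset_antisymm hVsub
  intro w hw
  rcases hcover hw with h | h
  · exact h
  · rw [hWempty] at h; exact absurd h (notMem_empty w)


end Geo3

section Main

variable {f : ℂ → ℂ} {r : ℝ}

private lemma main_r
    (hf : DifferentiableOn ℂ f (ball (0 : ℂ) 1))
    (hf' : ∀ z ∈ ball (0 : ℂ) 1, deriv f z ≠ 0)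
    (hpos : ∀ z ∈ ball (0 : ℂ) 1,
      0 < (1 + z * (deriv (deriv f) z / deriv f z)).re)
    (hr0 : 0 < r) (hr1 : r < 1) :
    f '' ball (0:ℂ) r = interior (closure (convexHull ℝ (f '' sphere (0:ℂ) r))) ∧
    (∀ x ∈ f '' sphere (0:ℂ) r,
      x ∉ interior (closure (convexHull ℝ (f '' sphere (0:ℂ) r)))) ∧
    InjOn f (sphere (0:ℂ) r) := by
  obtain ⟨ψ, ρ, hγd, hρ, hρc, hψm, hψc, hψp⟩ := curve_data hf hf' hpos hr0 hr1
  have hγp : ∀ θ, (fun t => f (circleMap 0 r t)) (θ + 2*π) = (fun t => f (circleMap 0 r t)) θ :=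
    fun θ => congrArg f (periodic_circleMap 0 r θ)
  have hsupp := support_global hγd hρ hψm hψc hγp hψp
  have hnot : ∀ x ∈ f '' sphere (0:ℂ) r,
      x ∉ interior (closure (convexHull ℝ (f '' sphere (0:ℂ) r))) := by
    rintro _ ⟨z, hz, rfl⟩ h
    obtain ⟨θ0, hθ0⟩ : ∃ θ, circleMap 0 r θ = z := by
      have : z ∈ Set.range (circleMap 0 r) := by
        rw [range_circleMap, abs_of_pos hr0]; exact hz
      exact this
    exact not_interior hsupp hr0 θ0 (by rw [hθ0]; exact h)
  have hfc : ContinuousOn f (closedBall (0:ℂ) r) :=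
    hf.continuousOn.mono (closedBall_subset_ball hr1)
  have heq := image_ball_eq_interior hr0 hfc (image_ball_open hf hf' hr1)
    (image_closedBall_subset hf hr0 hr1) hnot
  refine ⟨heq, hnot, ?_⟩
  intro a ha b hb hab
  by_contra hne
  have hra : ‖a‖ = r := by
    rw [← mem_sphere_zero_iff_norm]; exact ha
  have hrb : ‖b‖ = r := by
    rw [← mem_sphere_zero_iff_norm]; exact hb
  have ha' : circleMap 0 r (Complex.arg a) = a := by
    rw [circleMap, ← hra, zero_add]
    exact Complex.norm_mul_exp_arg_mul_I a
  have hb' : circleMap 0 r (Complex.arg b) = b := by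
    rw [circleMap, ← hrb, zero_add]
    exact Complex.norm_mul_exp_arg_mul_I b
  have hargne : Complex.arg a ≠ Complex.arg b := by
    intro h
    exact hne (by rw [← ha', ← hb', h])
  rcases lt_or_gt_of_ne hargne with h | h
  · have h2 : Complex.arg b < Complex.arg a + 2*π := by
      have := Complex.arg_le_pi b
      have := Complex.neg_pi_lt_arg a
      have := Real.pi_pos
      linarith
    exact curve_inj hγd hρ hρc hψm hψc hγp hψp h h2
      (show f (circleMap 0 r (Complex.arg a)) = f (circleMap 0 r (Complex.arg b)) by
        rw [ha', hb']; exact hab)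
  · have h2 : Complex.arg a < Complex.arg b + 2*π := by
      have := Complex.arg_le_pi a
      have := Complex.neg_pi_lt_arg b
      have := Real.pi_pos
      linarith
    exact curve_inj hγd hρ hρc hψm hψc hγp hψp h h2
      (show f (circleMap 0 r (Complex.arg b)) = f (circleMap 0 r (Complex.arg a)) by
        rw [ha', hb']; exact hab.symm)

end Main

end SchwarzianAux

/-- The Schwarzian derivative `Sf = (f''/f')' - (1/2)(f''/f')²`. -/
noncomputable def schwarzian (f : ℂ → ℂ) (z : ℂ) : ℂ :=
  deriv (fun w => deriv (deriv f) w / deriv f w) z -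
    (1 / 2) * (deriv (deriv f) z / deriv f z) ^ 2

/-- If `f` is holomorphic with nonvanishing derivative on the unit disk and
`Re(1 + z f''/f') ≥ (1/4)(1-|z|²)(2|Sf| + |f''/f'|²)` on the disk,
then `f` is injective on the disk and its image is convex. -/
theorem schwarzian_inequality_implies_convex_mapping
    (f : ℂ → ℂ)
    (hf : DifferentiableOn ℂ f (ball (0 : ℂ) 1))
    (hf' : ∀ z ∈ ball (0 : ℂ) 1, deriv f z ≠ 0)
    (hineq : ∀ z ∈ ball (0 : ℂ) 1,
      (1 + z * (deriv (deriv f) z / deriv f z)).re ≥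
        (1 / 4) * (1 - ‖z‖ ^ 2) *
          (2 * ‖schwarzian f z‖ +
            ‖deriv (deriv f) z / deriv f z‖ ^ 2)) :
    InjOn f (ball (0 : ℂ) 1) ∧ Convex ℝ (f '' ball (0 : ℂ) 1) := by
  have hRe0 : ∀ z ∈ ball (0 : ℂ) 1,
      0 ≤ (1 + z * (deriv (deriv f) z / deriv f z)).re := by
    intro z hz
    have h := hineq z hz
    have h1 : ‖z‖ < 1 := by
      rw [← mem_ball_zero_iff]; exact hz
    have h2 : (0:ℝ) ≤ ‖z‖ := norm_nonneg z
    have h3 : (0:ℝ) ≤ 1 - ‖z‖ ^ 2 := by nlinarith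
    have h4 : (0:ℝ) ≤ 2 * ‖schwarzian f z‖ +
        ‖deriv (deriv f) z / deriv f z‖ ^ 2 := by positivity
    nlinarith
  have hpos := re_p_pos hf hf' hRe0
  constructor
  · -- injectivity
    intro a ha b hb hab
    by_contra hne
    rw [mem_ball_zero_iff] at ha hb
    rcases lt_trichotomy ‖a‖ ‖b‖ with h | h | h
    · obtain ⟨heq, hnot, _⟩ := main_r hf hf' hpos
        (lt_of_le_of_lt (norm_nonneg a) h) hb
      have hfa : f a ∈ interior (closure (convexHull ℝ (f '' sphere (0:ℂ) ‖b‖))) := by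
        rw [← heq]
        exact mem_image_of_mem f (mem_ball_zero_iff.2 h)
      have hfb : f b ∈ f '' sphere (0:ℂ) ‖b‖ :=
        mem_image_of_mem f (mem_sphere_zero_iff_norm.2 rfl)
      exact hnot (f b) hfb (hab ▸ hfa)
    · rcases eq_or_lt_of_le (norm_nonneg b) with h0 | h0
      · exact hne (by
          have hb0 : b = 0 := norm_eq_zero.1 h0.symm
          have ha0 : a = 0 := norm_eq_zero.1 (by rw [h, ← h0])
          rw [ha0, hb0])
      · obtain ⟨_, _, hinj⟩ := main_r hf hf' hpos h0 hb
        exact hne (hinj (mem_sphere_zero_iff_norm.2 h) (mem_sphere_zero_iff_norm.2 rfl) hab)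
    · obtain ⟨heq, hnot, _⟩ := main_r hf hf' hpos
        (lt_of_le_of_lt (norm_nonneg b) h) ha
      have hfb : f b ∈ interior (closure (convexHull ℝ (f '' sphere (0:ℂ) ‖a‖))) := by
        rw [← heq]
        exact mem_image_of_mem f (mem_ball_zero_iff.2 h)
      have hfa : f a ∈ f '' sphere (0:ℂ) ‖a‖ :=
        mem_image_of_mem f (mem_sphere_zero_iff_norm.2 rfl)
      exact hnot (f a) hfa (hab ▸ hfb)
  · -- convexity
    rintro _ ⟨zx, hzx, rfl⟩ _ ⟨zy, hzy, rfl⟩ α β hα hβ hαβ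
    rw [mem_ball_zero_iff] at hzx hzy
    set R : ℝ := max (max ‖zx‖ ‖zy‖) (1/2) with hR
    have hR1 : R < 1 := by
      apply max_lt (max_lt hzx hzy)
      norm_num
    set r : ℝ := (R + 1) / 2 with hr
    have hRr : R < r := by
      rw [hr]; linarith
    have hr0 : 0 < r := by
      have : (1/2 : ℝ) ≤ R := le_max_right _ _
      rw [hr]; linarith
    have hr1 : r < 1 := by rw [hr]; linarith
    obtain ⟨heq, _, _⟩ := main_r hf hf' hpos hr0 hr1
    have hx : f zx ∈ interior (closure (convexHull ℝ (f '' sphere (0:ℂ) r))) := by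
      rw [← heq]
      apply mem_image_of_mem f
      rw [mem_ball_zero_iff]
      exact lt_of_le_of_lt ((le_max_left _ _).trans (le_max_left _ _)) hRr
    have hy : f zy ∈ interior (closure (convexHull ℝ (f '' sphere (0:ℂ) r))) := by
      rw [← heq]
      apply mem_image_of_mem f
      rw [mem_ball_zero_iff]
      exact lt_of_le_of_lt ((le_max_right _ _).trans (le_max_left _ _)) hRr
    have hconv : Convex ℝ (interior (closure (convexHull ℝ (f '' sphere (0:ℂ) r)))) :=
      (convex_convexHull ℝ _).closure.interior
    have hmem := hconv hx hy hα hβ hαβ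
    rw [← heq] at hmem
    exact image_mono (f := f) (ball_subset_ball hr1.le) hmem
end

section
/- Let f be holomorphic on the unit disk 𝔻 = {z ∈ ℂ : |z| < 1} with f'(z) ≠ 0 for all z ∈ 𝔻. If for every z ∈ 𝔻 one has (1 − |z|²)²·|Sf(z)| + 2·|p(z)|² ≤ 2, where p(z) = conj(z) − (1/2)(1 − |z|²)·f''(z)/f'(z), then f is injective on 𝔻 and f(𝔻) is a convex set. -/
open Complex Metric Set intervalIntegral

noncomputable def pFun (f : ℂ → ℂ) (z : ℂ) : ℂ :=
  (starRingEnd ℂ) z -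
    (1 / 2) * ((1 - ‖z‖ ^ 2 : ℝ) : ℂ) * (deriv (deriv f) z / deriv f z)

namespace KimMinda

/-- `f''/f'`. -/
noncomputable def gf (f : ℂ → ℂ) (z : ℂ) : ℂ := deriv (deriv f) z / deriv f z

lemma re_q_pos (f : ℂ → ℂ)
    (hineq : ∀ z ∈ ball (0 : ℂ) 1,
      (1 - ‖z‖ ^ 2) ^ 2 * ‖schwarzian f z‖ +
        2 * ‖pFun f z‖ ^ 2 ≤ 2) :
    ∀ z ∈ ball (0 : ℂ) 1, 0 < 1 + (z * gf f z).re := by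
  intro z hz
  have ha : ‖z‖ < 1 := by simpa [Complex.dist_eq] using hz
  have ha0 : (0:ℝ) ≤ ‖z‖ := norm_nonneg z
  set a : ℝ := ‖z‖ with hadef
  have hp : ‖pFun f z‖ ≤ 1 := by
    have h1 : (0:ℝ) ≤ (1 - a ^ 2) ^ 2 * ‖schwarzian f z‖ :=
      mul_nonneg (sq_nonneg _) (norm_nonneg _)
    have h2 : 2 * ‖pFun f z‖ ^ 2 ≤ 2 := by
      have := hineq z hz; linarith
    have h3 : ‖pFun f z‖ ^ 2 ≤ 1 := by linarith
    nlinarith [norm_nonneg (pFun f z)]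
  -- key identity : ((1 - a^2 : ℝ) : ℂ) * (z * gf f z) = 2 * ((a^2 : ℝ) - z * pFun f z)
  have hzz : z * (starRingEnd ℂ) z = ((a ^ 2 : ℝ) : ℂ) := by
    rw [Complex.mul_conj]
    norm_cast
    rw [← Complex.sq_norm]
  have hkey : ((1 - a ^ 2 : ℝ) : ℂ) * (z * gf f z) =
      ((2:ℝ):ℂ) * ((a ^ 2 : ℝ):ℂ) - ((2:ℝ):ℂ) * (z * pFun f z) := by
    rw [pFun, gf]
    rw [← hadef]
    push_cast at hzz ⊢
    set w := deriv (deriv f) z / deriv f z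
    linear_combination (2 : ℂ) * hzz
  have h4 : (1 - a ^ 2) * (z * gf f z).re = 2 * a ^ 2 - 2 * (z * pFun f z).re := by
    have h4' := congrArg Complex.re hkey
    simp only [Complex.re_ofReal_mul, Complex.sub_re, Complex.ofReal_re] at h4'
    linarith [h4']
  have h5 : (z * pFun f z).re ≤ a := by
    calc (z * pFun f z).re ≤ ‖z * pFun f z‖ := Complex.re_le_norm _
      _ = a * ‖pFun f z‖ := by rw [norm_mul]
      _ ≤ a * 1 := by exact mul_le_mul_of_nonneg_left hp ha0
      _ = a := mul_one a
  have h6 : (0:ℝ) < 1 - a ^ 2 := by nlinarith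
  have h7 : (1 - a ^ 2) * (1 + (z * gf f z).re) ≥ (1 - a)^2 := by
    rw [mul_add, mul_one, h4]; nlinarith
  nlinarith


section Circle

variable (f : ℂ → ℂ) (r : ℝ)

/-- `z(θ) * f''/f'(z(θ))` along the circle of radius `r`. -/
noncomputable def Qc (θ : ℝ) : ℂ := circleMap 0 r θ * gf f (circleMap 0 r θ)

/-- `1 + Re Q`, the derivative of the tangent angle. -/
noncomputable def rho (θ : ℝ) : ℝ := 1 + (Qc f r θ).re

noncomputable def mim (θ : ℝ) : ℝ := -(Qc f r θ).im

noncomputable def Mf (θ : ℝ) : ℝ := ∫ s in (0:ℝ)..θ, mim f r s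

/-- The tangent angle function. -/
noncomputable def Tf (θ : ℝ) : ℝ := Complex.arg (deriv f (r:ℂ)) + ∫ s in (0:ℝ)..θ, rho f r s

noncomputable def cf (θ : ℝ) : ℝ := r * ‖deriv f (r:ℂ)‖ * Real.exp (Mf f r θ)

variable {f r}
variable (hf : DifferentiableOn ℂ f (ball (0:ℂ) 1))
  (hf' : ∀ z ∈ ball (0 : ℂ) 1, deriv f z ≠ 0) (hr : 0 < r) (hr1 : r < 1)

include hr hr1 in
lemma mem_ball_circle (θ : ℝ) : circleMap 0 r θ ∈ ball (0:ℂ) 1 := by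
  simp only [mem_ball, Complex.dist_eq, sub_zero, norm_circleMap_zero]
  rw [abs_of_pos hr]; exact hr1

include hf in
lemma fanal : AnalyticOnNhd ℂ f (ball (0:ℂ) 1) := hf.analyticOnNhd isOpen_ball

include hf in
lemma f1anal : AnalyticOnNhd ℂ (deriv f) (ball (0:ℂ) 1) :=
  (fanal hf).deriv_of_isOpen isOpen_ball

include hf in
lemma f2anal : AnalyticOnNhd ℂ (deriv (deriv f)) (ball (0:ℂ) 1) :=
  (f1anal hf).deriv_of_isOpen isOpen_ball

include hf hf' in
lemma ganal : AnalyticOnNhd ℂ (gf f) (ball (0:ℂ) 1) :=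
  (f2anal hf).div (f1anal hf) hf'

include hf hf' hr hr1 in
lemma cont_Q : Continuous (Qc f r) := by
  have h1 : Continuous fun θ => circleMap 0 r θ := continuous_circleMap 0 r
  have h2 : Continuous fun θ => gf f (circleMap 0 r θ) :=
    ((ganal hf hf').continuousOn.comp_continuous h1 (fun θ => mem_ball_circle hr hr1 θ))
  exact h1.mul h2

include hf hf' hr hr1 in
lemma hasDerivAt_M (θ : ℝ) : HasDerivAt (Mf f r) (mim f r θ) θ := by
  have hc : Continuous (mim f r) := by
    have := cont_Q hf hf' hr hr1
    exact (Complex.continuous_im.comp this).neg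
  exact intervalIntegral.integral_hasDerivAt_right (hc.intervalIntegrable _ _)
    hc.stronglyMeasurable.stronglyMeasurableAtFilter hc.continuousAt

include hf hf' hr hr1 in
lemma hasDerivAt_T (θ : ℝ) : HasDerivAt (Tf f r) (rho f r θ) θ := by
  have hc : Continuous (rho f r) := by
    have := cont_Q hf hf' hr hr1
    exact continuous_const.add (Complex.continuous_re.comp this)
  exact (intervalIntegral.integral_hasDerivAt_right (hc.intervalIntegrable _ _)
    hc.stronglyMeasurable.stronglyMeasurableAtFilter hc.continuousAt).const_add _

include hf hf' hr hr1 in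
lemma rho_pos (hq : ∀ z ∈ ball (0 : ℂ) 1, 0 < 1 + (z * gf f z).re) (θ : ℝ) :
    0 < rho f r θ := hq _ (mem_ball_circle hr hr1 θ)

include hf hf' hr hr1 in
lemma deriv_f_circle (θ : ℝ) :
    deriv f (circleMap 0 r θ) =
      (‖deriv f (r:ℂ)‖ : ℂ) *
        Complex.exp ((Mf f r θ : ℝ) + ((Tf f r θ - θ : ℝ)) * Complex.I) := by
  set u : ℝ → ℂ := fun t => deriv f (circleMap 0 r t) *
      Complex.exp (-(((Mf f r t : ℝ) : ℂ) + ((Tf f r t - t : ℝ) : ℂ) * Complex.I)) with hu_def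
  have hu : ∀ t, HasDerivAt u 0 t := by
    intro t
    have hz := mem_ball_circle hr hr1 t
    set zc := circleMap 0 r t with hzc
    have h1 : HasDerivAt (deriv f) (deriv (deriv f) zc) zc :=
      ((f1anal hf) _ hz).differentiableAt.hasDerivAt
    have h2 : HasDerivAt (fun s => deriv f (circleMap 0 r s))
        ((circleMap 0 r t * Complex.I) • deriv (deriv f) zc) t :=
      (h1.scomp t (hasDerivAt_circleMap 0 r t) :)
    have hMc : HasDerivAt (fun s => ((Mf f r s : ℝ) : ℂ)) ((mim f r t : ℝ) : ℂ) t :=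
      (hasDerivAt_M hf hf' hr hr1 t).ofReal_comp
    have hTc : HasDerivAt (fun s => ((Tf f r s - s : ℝ) : ℂ)) ((rho f r t - 1 : ℝ) : ℂ) t :=
      ((hasDerivAt_T hf hf' hr hr1 t).sub (hasDerivAt_id t)).ofReal_comp
    have hw : HasDerivAt (fun s => -(((Mf f r s : ℝ) : ℂ) + ((Tf f r s - s : ℝ) : ℂ) * Complex.I))
        (-(((mim f r t : ℝ) : ℂ) + ((rho f r t - 1 : ℝ) : ℂ) * Complex.I)) t :=
      (hMc.add (hTc.mul_const Complex.I)).neg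
    have hE := hw.cexp
    have hu' := h2.mul hE
    set X := -(((Mf f r t : ℝ) : ℂ) + ((Tf f r t - t : ℝ) : ℂ) * Complex.I) with hX
    have hzero : (circleMap 0 r t * Complex.I) • deriv (deriv f) zc * Complex.exp X +
        deriv f zc * (Complex.exp X *
          (-(((mim f r t : ℝ) : ℂ) + ((rho f r t - 1 : ℝ) : ℂ) * Complex.I))) = 0 := by
      have hzf : zc * deriv (deriv f) zc = deriv f zc * Qc f r t := by
        rw [Qc, gf, ← hzc]
        field_simp [hf' zc hz]
      have hQri : ((Qc f r t).re : ℂ) + ((Qc f r t).im : ℂ) * Complex.I = Qc f r t :=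
        Complex.re_add_im _
      have hmm : ((mim f r t : ℝ) : ℂ) = -(((Qc f r t).im : ℝ) : ℂ) := by
        rw [mim]; push_cast; ring
      have hrr : ((rho f r t - 1 : ℝ) : ℂ) = (((Qc f r t).re : ℝ) : ℂ) := by
        rw [rho]; push_cast; ring
      rw [smul_eq_mul, hmm, hrr, ← hzc]
      linear_combination (Complex.exp X * Complex.I) * hzf
        - (Complex.exp X * deriv f zc * Complex.I) * hQri
        + (Complex.exp X * deriv f zc * ((Qc f r t).im : ℂ)) * Complex.I_sq
    rw [hzero] at hu'
    exact hu'
  have hconst : u θ = u 0 :=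
    is_const_of_deriv_eq_zero (fun s => (hu s).differentiableAt) (fun s => (hu s).deriv) θ 0
  have hu0 : u 0 = (‖deriv f (r:ℂ)‖ : ℂ) := by
    have hc0 : circleMap 0 r 0 = (r : ℂ) := by simp [circleMap]
    have hM0 : Mf f r 0 = 0 := intervalIntegral.integral_same
    have hT0 : Tf f r 0 = Complex.arg (deriv f (r:ℂ)) := by
      rw [Tf, intervalIntegral.integral_same, add_zero]
    rw [hu_def]
    simp only [hc0, hM0, hT0]
    have habs := Complex.norm_mul_exp_arg_mul_I (deriv f (r:ℂ))
    have hne : Complex.exp ((Complex.arg (deriv f (r:ℂ)) : ℝ) * Complex.I) ≠ 0 :=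
      Complex.exp_ne_zero _
    rw [show (-(((0:ℝ):ℂ) + ((Complex.arg (deriv f (r:ℂ)) - 0 : ℝ) : ℂ) * Complex.I)) =
      -(((Complex.arg (deriv f (r:ℂ)) : ℝ) : ℂ) * Complex.I) by push_cast; ring]
    rw [Complex.exp_neg]
    field_simp
    linear_combination -habs
  have hθ := hconst.trans hu0
  rw [hu_def] at hθ
  simp only at hθ
  set X := ((Mf f r θ : ℝ) : ℂ) + ((Tf f r θ - θ : ℝ) : ℂ) * Complex.I with hX
  have hne : Complex.exp X ≠ 0 := Complex.exp_ne_zero _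
  calc deriv f (circleMap 0 r θ)
      = deriv f (circleMap 0 r θ) * Complex.exp (-X) * Complex.exp X := by
        rw [Complex.exp_neg]; field_simp
    _ = (‖deriv f (r:ℂ)‖ : ℂ) * Complex.exp X := by rw [hθ]

include hf hf' hr hr1 in
lemma gamma_hasDeriv (θ : ℝ) :
    HasDerivAt (fun t => f (circleMap 0 r t))
      (((cf f r θ : ℝ) : ℂ) * Complex.exp (((Tf f r θ : ℝ) : ℂ) * Complex.I) * Complex.I) θ := by
  have hz := mem_ball_circle hr hr1 θ
  have h1 : HasDerivAt f (deriv f (circleMap 0 r θ)) (circleMap 0 r θ) :=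
    ((fanal hf) _ hz).differentiableAt.hasDerivAt
  have h2 : HasDerivAt (fun t => f (circleMap 0 r t))
      ((circleMap 0 r θ * Complex.I) • deriv f (circleMap 0 r θ)) θ :=
    HasDerivAt.scomp θ h1 (hasDerivAt_circleMap 0 r θ)
  have heq : (circleMap 0 r θ * Complex.I) • deriv f (circleMap 0 r θ)
      = ((cf f r θ : ℝ) : ℂ) * Complex.exp (((Tf f r θ : ℝ) : ℂ) * Complex.I) * Complex.I := by
    rw [smul_eq_mul, deriv_f_circle hf hf' hr hr1 θ, circleMap_zero]
    rw [show ((Mf f r θ : ℝ) : ℂ) + ((Tf f r θ - θ : ℝ) : ℂ) * Complex.I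
      = (((Tf f r θ : ℝ) : ℂ) * Complex.I + ((Mf f r θ : ℝ) : ℂ)) - ((θ : ℝ) : ℂ) * Complex.I
      from by push_cast; ring]
    rw [Complex.exp_sub, Complex.exp_add, cf]
    push_cast [Complex.ofReal_exp]
    field_simp [Complex.exp_ne_zero]
  rw [heq] at h2
  exact h2

include hf hf' hr hr1 in
lemma integral_rho : (∫ s in (0:ℝ)..(2*Real.pi), rho f r s) = 2*Real.pi := by
  set Φ : ℂ → ℂ := fun z => 1 + z * gf f z with hΦdef
  have hΦ : AnalyticOnNhd ℂ Φ (ball (0:ℂ) 1) :=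
    analyticOnNhd_const.add (analyticOnNhd_id.mul (ganal hf hf'))
  have hsub : closedBall (0:ℂ) r ⊆ ball (0:ℂ) 1 := closedBall_subset_ball hr1
  have key := Complex.circleIntegral_sub_inv_smul_of_differentiable_on_off_countable
    (R := r) (c := 0) (w := 0) (s := ∅) countable_empty (mem_ball_self hr)
    ((hΦ.continuousOn).mono hsub)
    (fun x hx => (hΦ _ (hsub (ball_subset_closedBall hx.1))).differentiableAt)
  have hΦ0 : Φ 0 = 1 := by simp [hΦdef]
  rw [hΦ0] at key
  unfold circleIntegral at key
  have hcong : EqOn (fun θ : ℝ => deriv (circleMap 0 r) θ •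
        ((circleMap 0 r θ - 0)⁻¹ • Φ (circleMap 0 r θ)))
      (fun θ : ℝ => Complex.I * ((1:ℂ) + Qc f r θ)) (Set.uIcc 0 (2*Real.pi)) := by
    intro θ _
    have hne : circleMap 0 r θ ≠ 0 := by
      simpa using circleMap_ne_center (c := (0:ℂ)) (ne_of_gt hr) (θ := θ)
    simp only [deriv_circleMap, smul_eq_mul, sub_zero]
    have : Φ (circleMap 0 r θ) = 1 + Qc f r θ := rfl
    rw [this]
    field_simp
  rw [intervalIntegral.integral_congr hcong, intervalIntegral.integral_const_mul, smul_eq_mul, mul_one] at key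
  have hX : (∫ θ in (0:ℝ)..(2*Real.pi), ((1:ℂ) + Qc f r θ)) = ((2*Real.pi : ℝ) : ℂ) := by
    apply mul_left_cancel₀ Complex.I_ne_zero
    rw [key]
    push_cast
    ring
  have hIcont : Continuous fun θ => (1:ℂ) + Qc f r θ :=
    continuous_const.add (cont_Q hf hf' hr hr1)
  have hre := Complex.reCLM.intervalIntegral_comp_comm
    (hIcont.intervalIntegrable (μ := MeasureTheory.volume) 0 (2*Real.pi))
  rw [hX] at hre
  have : (∫ s in (0:ℝ)..(2*Real.pi), rho f r s)
      = ∫ θ in (0:ℝ)..(2*Real.pi), Complex.reCLM ((1:ℂ) + Qc f r θ) := by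
    apply intervalIntegral.integral_congr
    intro s _
    simp [rho]
  rw [this, hre]
  simp

include hf hf' hr hr1 in
lemma cont_rho : Continuous (rho f r) :=
  continuous_const.add (Complex.continuous_re.comp (cont_Q hf hf' hr hr1))

include hf hf' hr hr1 in
lemma T_add (θ : ℝ) : Tf f r (θ + 2*Real.pi) = Tf f r θ + 2*Real.pi := by
  have hc := cont_rho hf hf' hr hr1
  have hInt : ∀ a b : ℝ, IntervalIntegrable (rho f r) MeasureTheory.volume a b :=
    fun a b => hc.intervalIntegrable a b
  have hadd := intervalIntegral.integral_add_adjacent_intervals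
    (hInt 0 θ) (hInt θ (θ + 2*Real.pi))
  have hper : Function.Periodic (rho f r) (2*Real.pi) := by
    intro s
    have hc : circleMap 0 r (s + 2*Real.pi) = circleMap 0 r s := periodic_circleMap 0 r s
    simp only [rho, Qc, hc]
  have hshift := hper.intervalIntegral_add_eq θ 0
  rw [zero_add] at hshift
  have hmean := integral_rho hf hf' hr hr1
  simp only [Tf]
  rw [← hadd, hshift, hmean]
  ring

include hf hf' hr hr1 in
lemma T_strictMono (hq : ∀ z ∈ ball (0 : ℂ) 1, 0 < 1 + (z * gf f z).re) :
    StrictMono (Tf f r) := by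
  apply strictMono_of_deriv_pos
  intro x
  rw [(hasDerivAt_T hf hf' hr hr1 x).deriv]
  exact rho_pos hf hf' hr hr1 hq x

include hf hf' hr hr1 in
lemma psi_pos (hq : ∀ z ∈ ball (0 : ℂ) 1, 0 < 1 + (z * gf f z).re)
    (θ0 θ : ℝ) (hθ : θ ∈ Ioo θ0 (θ0 + 2*Real.pi)) :
    0 < -(Complex.exp (-((Tf f r θ0 : ℝ) : ℂ) * Complex.I) *
        (f (circleMap 0 r θ) - f (circleMap 0 r θ0))).re := by
  set T := Tf f r with hT
  set ψ : ℝ → ℝ := fun t => -(Complex.exp (-((T θ0 : ℝ) : ℂ) * Complex.I) *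
        (f (circleMap 0 r t) - f (circleMap 0 r θ0))).re with hψ
  have hψder : ∀ t, HasDerivAt ψ (cf f r t * Real.sin (T t - T θ0)) t := by
    intro t
    have hγ := gamma_hasDeriv hf hf' hr hr1 t
    have h1 : HasDerivAt (fun s => Complex.exp (-((T θ0 : ℝ) : ℂ) * Complex.I) *
        (f (circleMap 0 r s) - f (circleMap 0 r θ0)))
        (Complex.exp (-((T θ0 : ℝ) : ℂ) * Complex.I) *
          (((cf f r t : ℝ) : ℂ) * Complex.exp (((T t : ℝ) : ℂ) * Complex.I) * Complex.I)) t :=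
      ((hγ.sub_const _).const_mul _)
    have h2 := (Complex.reCLM.hasFDerivAt.comp_hasDerivAt t h1).neg
    have hprod : Complex.exp (-((T θ0 : ℝ) : ℂ) * Complex.I) *
        Complex.exp (((T t : ℝ) : ℂ) * Complex.I)
        = Complex.exp (((T t - T θ0 : ℝ) : ℂ) * Complex.I) := by
      rw [← Complex.exp_add]; congr 1; push_cast; ring
    have heq : -(Complex.reCLM (Complex.exp (-((T θ0 : ℝ) : ℂ) * Complex.I) *
          (((cf f r t : ℝ) : ℂ) * Complex.exp (((T t : ℝ) : ℂ) * Complex.I) * Complex.I)))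
        = cf f r t * Real.sin (T t - T θ0) := by
      rw [show Complex.exp (-((T θ0 : ℝ) : ℂ) * Complex.I) *
          (((cf f r t : ℝ) : ℂ) * Complex.exp (((T t : ℝ) : ℂ) * Complex.I) * Complex.I)
        = ((cf f r t : ℝ) : ℂ) * (Complex.exp (-((T θ0 : ℝ) : ℂ) * Complex.I) *
            Complex.exp (((T t : ℝ) : ℂ) * Complex.I)) * Complex.I from by ring]
      rw [hprod, Complex.exp_mul_I, ← Complex.ofReal_cos, ← Complex.ofReal_sin]
      simp only [Complex.reCLM_apply, Complex.mul_re, Complex.mul_im, Complex.add_re,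
        Complex.add_im, Complex.I_re, Complex.I_im, Complex.ofReal_re, Complex.ofReal_im]
      ring
    rw [heq] at h2
    exact h2
  have hcψ : Continuous ψ := by
    have : Differentiable ℝ ψ := fun t => (hψder t).differentiableAt
    exact this.continuous
  have hTmono := T_strictMono hf hf' hr hr1 hq
  rw [← hT] at hTmono
  have hTcont : Continuous T := by
    have : Differentiable ℝ T := fun t => (hasDerivAt_T hf hf' hr hr1 t).differentiableAt
    exact this.continuous
  have hT2 : T (θ0 + 2*Real.pi) = T θ0 + 2*Real.pi := T_add hf hf' hr hr1 θ0
  have hπ : (0:ℝ) < Real.pi := Real.pi_pos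
  -- find m with T m = T θ0 + π
  obtain ⟨m, hm, hTm⟩ : ∃ m ∈ Ioo θ0 (θ0 + 2*Real.pi), T m = T θ0 + Real.pi := by
    have hsub : Ioo (T θ0) (T (θ0 + 2*Real.pi)) ⊆ T '' Ioo θ0 (θ0 + 2*Real.pi) :=
      intermediate_value_Ioo (by linarith) hTcont.continuousOn
    have hmem : T θ0 + Real.pi ∈ Ioo (T θ0) (T (θ0 + 2*Real.pi)) := by
      rw [hT2]; constructor <;> linarith
    obtain ⟨m, hm, hTm⟩ := hsub hmem
    exact ⟨m, hm, hTm⟩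
  have hcf_pos : ∀ t, 0 < cf f r t := by
    intro t
    have : deriv f ((r:ℝ):ℂ) ≠ 0 := by
      apply hf'
      simp only [mem_ball, Complex.dist_eq, sub_zero]
      rw [Complex.norm_real, Real.norm_eq_abs, abs_of_pos hr]; exact hr1
    have habs : 0 < ‖deriv f ((r:ℝ):ℂ)‖ := by
      exact norm_pos_iff.mpr this
    exact mul_pos (mul_pos hr habs) (Real.exp_pos _)
  -- ψ strictly increasing on [θ0, m]
  have hmono : StrictMonoOn ψ (Icc θ0 m) := by
    apply strictMonoOn_of_deriv_pos (convex_Icc _ _) hcψ.continuousOn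
    intro x hx
    rw [interior_Icc] at hx
    rw [(hψder x).deriv]
    apply mul_pos (hcf_pos x)
    apply Real.sin_pos_of_pos_of_lt_pi
    · have := hTmono hx.1; linarith
    · have := hTmono hx.2; rw [hTm] at this; linarith
  have hanti : StrictAntiOn ψ (Icc m (θ0 + 2*Real.pi)) := by
    apply strictAntiOn_of_deriv_neg (convex_Icc _ _) hcψ.continuousOn
    intro x hx
    rw [interior_Icc] at hx
    rw [(hψder x).deriv]
    have hs : Real.sin (T x - T θ0) < 0 := by
      have h1 := hTmono hx.1
      have h2 := hTmono hx.2
      rw [hTm] at h1; rw [hT2] at h2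
      have hspos : 0 < Real.sin (T x - T θ0 - Real.pi) :=
        Real.sin_pos_of_pos_of_lt_pi (by linarith) (by linarith)
      have hsub := Real.sin_sub_pi (T x - T θ0)
      linarith
    exact mul_neg_of_pos_of_neg (hcf_pos x) hs
  have hψθ0 : ψ θ0 = 0 := by simp [hψ]
  have hψ2π : ψ (θ0 + 2*Real.pi) = 0 := by
    have hc : circleMap 0 r (θ0 + 2*Real.pi) = circleMap 0 r θ0 := periodic_circleMap 0 r θ0
    simp [hψ, hc]
  rcases le_or_gt θ m with hle | hgt
  · have h := hmono ⟨le_rfl, hm.1.le⟩ ⟨hθ.1.le, hle⟩ hθ.1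
    rw [hψθ0] at h
    exact h
  · have h := hanti ⟨hgt.le, hθ.2.le⟩ ⟨(by linarith [hm.2] : m ≤ θ0 + 2*Real.pi), le_rfl⟩ hθ.2
    rw [hψ2π] at h
    exact h

include hf hf' hr hr1 in
lemma interior_support (hq : ∀ z ∈ ball (0 : ℂ) 1, 0 < 1 + (z * gf f z).re)
    (θ0 : ℝ) {z : ℂ} (hz : ‖z‖ < r) :
    (Complex.exp (-((Tf f r θ0 : ℝ) : ℂ) * Complex.I) *
      (f z - f (circleMap 0 r θ0))).re < 0 := by
  have hπ : (0:ℝ) < Real.pi := Real.pi_pos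
  set E := Complex.exp (-((Tf f r θ0 : ℝ) : ℂ) * Complex.I) with hE
  have hEne : E ≠ 0 := Complex.exp_ne_zero _
  set G : ℂ → ℂ := fun w => Complex.exp (E * (f w - f (circleMap 0 r θ0))) with hG
  have hsub : closedBall (0:ℂ) r ⊆ ball (0:ℂ) 1 := closedBall_subset_ball hr1
  have hfd : DifferentiableOn ℂ f (closedBall (0:ℂ) r) := hf.mono hsub
  have hzball : z ∈ ball (0:ℂ) r := by
    simp only [mem_ball, Complex.dist_eq, sub_zero]; exact hz
  have hGdiff : DifferentiableOn ℂ G (closedBall (0:ℂ) r) :=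
    (((hfd.sub_const _).const_mul E).cexp)
  have hGd : DiffContOnCl ℂ G (ball (0:ℂ) r) :=
    ⟨hGdiff.mono ball_subset_closedBall, by
      rw [closure_ball (0:ℂ) (ne_of_gt hr)]
      exact hGdiff.continuousOn⟩
  -- boundary bound
  have hbd : ∀ x ∈ frontier (ball (0:ℂ) r), ‖G x‖ ≤ 1 := by
    intro x hx
    rw [frontier_ball (0:ℂ) (ne_of_gt hr)] at hx
    have habs : ‖x‖ = r := by
      simpa [Complex.dist_eq] using hx
    have hxc : circleMap 0 r (Complex.arg x) = x := by
      rw [circleMap_zero, ← habs]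
      exact Complex.norm_mul_exp_arg_mul_I x
    obtain ⟨k, hk, -⟩ := existsUnique_add_zsmul_mem_Ioc (by linarith : (0:ℝ) < 2*Real.pi)
      (Complex.arg x) θ0
    set θ' := Complex.arg x + k • (2*Real.pi) with hθ'
    have hxc' : circleMap 0 r θ' = x := by
      rw [hθ', ((periodic_circleMap 0 r).zsmul k) (Complex.arg x), hxc]
    have hre : (E * (f x - f (circleMap 0 r θ0))).re ≤ 0 := by
      rcases eq_or_lt_of_le hk.2 with heq | hlt
      · have : circleMap 0 r θ' = circleMap 0 r θ0 := by
          rw [heq]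
          exact (periodic_circleMap 0 r) θ0
        rw [← hxc', this]
        simp
      · have := psi_pos hf hf' hr hr1 hq θ0 θ' ⟨hk.1, hlt⟩
        rw [hxc'] at this
        linarith
    have : ‖G x‖ = Real.exp ((E * (f x - f (circleMap 0 r θ0))).re) := by
      rw [hG]
      simp only [Complex.norm_exp]
    rw [this]
    exact Real.exp_le_one_iff.mpr hre
  have hle : ∀ w ∈ closedBall (0:ℂ) r, ‖G w‖ ≤ 1 := by
    intro w hw
    apply Complex.norm_le_of_forall_mem_frontier_norm_le isBounded_ball hGd hbd
    rw [closure_ball (0:ℂ) (ne_of_gt hr)]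
    exact hw
  -- now already Re ≤ 0 on the closed ball; need strictness at z
  have hre_le : (E * (f z - f (circleMap 0 r θ0))).re ≤ 0 := by
    have := hle z (ball_subset_closedBall hzball)
    rw [hG] at this
    simp only [Complex.norm_exp] at this
    exact Real.exp_le_one_iff.mp this
  rcases lt_or_eq_of_le hre_le with hlt | heq0
  · exact hlt
  · exfalso
    -- maximum modulus: G is constant
    have hGz1 : ‖G z‖ = 1 := by
      rw [hG]
      simp only [Complex.norm_exp, heq0]
      exact Real.exp_zero
    have hmax : IsMaxOn (norm ∘ G) (ball (0:ℂ) r) z := by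
      intro w hw
      simp only [Function.comp_apply, hGz1]
      exact (hle w (ball_subset_closedBall hw)).trans (le_of_eq rfl)
    have hEqOn := Complex.eqOn_of_isPreconnected_of_isMaxOn_norm
      (convex_ball (0:ℂ) r).isPreconnected isOpen_ball
      (hGdiff.mono ball_subset_closedBall) hzball hmax
    have hderiv0 : deriv G z = 0 := by
      have hev : G =ᶠ[nhds z] (fun _ => G z) := by
        apply Filter.eventuallyEq_of_mem (isOpen_ball.mem_nhds hzball)
        intro w hw
        exact hEqOn hw
      rw [hev.deriv_eq]
      exact deriv_const _ _
    have hfz : HasDerivAt f (deriv f z) z :=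
      ((fanal hf) _ (ball_subset_ball hr1.le hzball)).differentiableAt.hasDerivAt
    have hGder : HasDerivAt G (G z * (E * deriv f z)) z := by
      have h1 : HasDerivAt (fun w => E * (f w - f (circleMap 0 r θ0))) (E * deriv f z) z :=
        ((hfz.sub_const _).const_mul E)
      exact h1.cexp
    rw [hGder.deriv] at hderiv0
    have : deriv f z ≠ 0 := hf' z (ball_subset_ball hr1.le hzball)
    exact (mul_ne_zero (mul_ne_zero (Complex.exp_ne_zero _) hEne) this)
      (by rw [← mul_assoc] at hderiv0; exact hderiv0)

end Circle

section Main

variable {f : ℂ → ℂ}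
variable (hf : DifferentiableOn ℂ f (ball (0:ℂ) 1))
  (hf' : ∀ z ∈ ball (0 : ℂ) 1, deriv f z ≠ 0)
  (hq : ∀ z ∈ ball (0 : ℂ) 1, 0 < 1 + (z * gf f z).re)

include hf hf' hq in
lemma inj_aux {z1 z2 : ℂ} (h1 : z1 ∈ ball (0:ℂ) 1) (h2 : z2 ∈ ball (0:ℂ) 1)
    (hle : ‖z1‖ ≤ ‖z2‖) (hne : z1 ≠ z2) : f z1 ≠ f z2 := by
  have hb2 : ‖z2‖ < 1 := by simpa [Complex.dist_eq] using h2
  rcases lt_or_eq_of_le hle with hlt | heq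
  · -- different moduli
    set r := ‖z2‖ with hrdef
    have hr : 0 < r := lt_of_le_of_lt (norm_nonneg z1) hlt
    have hz2c : circleMap 0 r (Complex.arg z2) = z2 := by
      rw [circleMap_zero]
      exact Complex.norm_mul_exp_arg_mul_I z2
    have hkey := interior_support hf hf' hr hb2 hq (Complex.arg z2) hlt
    rw [hz2c] at hkey
    intro hcontra
    rw [hcontra] at hkey
    simp at hkey
  · -- equal moduli
    set r := ‖z2‖ with hrdef
    have hr : 0 < r := by
      rcases eq_or_lt_of_le (norm_nonneg z2) with h0 | h0
      · exfalso
        apply hne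
        have hz20 : z2 = 0 := by
          rwa [eq_comm, norm_eq_zero] at h0
        have hz10 : z1 = 0 := by
          rw [← norm_eq_zero]
          rw [heq, hrdef, hz20, norm_zero]
        rw [hz10, hz20]
      · exact h0
    have hπ : (0:ℝ) < Real.pi := Real.pi_pos
    have hz1c : circleMap 0 r (Complex.arg z1) = z1 := by
      rw [circleMap_zero, ← heq]
      exact Complex.norm_mul_exp_arg_mul_I z1
    obtain ⟨k, hk, -⟩ := existsUnique_add_zsmul_mem_Ioc (by linarith : (0:ℝ) < 2*Real.pi)
      (Complex.arg z2) (Complex.arg z1)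
    set θ2 := Complex.arg z2 + k • (2*Real.pi) with hθ2
    have hz2c : circleMap 0 r θ2 = z2 := by
      rw [hθ2, ((periodic_circleMap 0 r).zsmul k) (Complex.arg z2), circleMap_zero]
      exact Complex.norm_mul_exp_arg_mul_I z2
    rcases eq_or_lt_of_le hk.2 with hend | hIoo
    · exfalso
      apply hne
      rw [← hz1c, ← hz2c, hend]
      exact ((periodic_circleMap 0 r) (Complex.arg z1)).symm ▸ rfl
    · have hkey := psi_pos hf hf' hr hb2 hq (Complex.arg z1) θ2 ⟨hk.1, hIoo⟩
      rw [hz1c, hz2c] at hkey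
      intro hcontra
      rw [hcontra] at hkey
      simp at hkey

include hf hf' hq in
lemma injOn_ball : InjOn f (ball (0:ℂ) 1) := by
  intro x hx y hy hxy
  by_contra hne
  rcases le_total (‖x‖) (‖y‖) with h | h
  · exact inj_aux hf hf' hq hx hy h hne hxy
  · exact inj_aux hf hf' hq hy hx h (Ne.symm hne) hxy.symm

include hf hf' hq in
lemma convex_image : Convex ℝ (f '' ball (0:ℂ) 1) := by
  rw [convex_iff_segment_subset]
  rintro w1 ⟨z1, hz1, rfl⟩ w2 ⟨z2, hz2, rfl⟩ w hw
  rw [segment_eq_image] at hw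
  obtain ⟨t, ht, rfl⟩ := hw
  have hb1 : ‖z1‖ < 1 := by simpa [Complex.dist_eq] using hz1
  have hb2 : ‖z2‖ < 1 := by simpa [Complex.dist_eq] using hz2
  set r : ℝ := (max (‖z1‖) (‖z2‖) + 1) / 2 with hrdef
  have hmax0 : 0 ≤ max (‖z1‖) (‖z2‖) :=
    le_trans (norm_nonneg z1) (le_max_left _ _)
  have hmax1 : max (‖z1‖) (‖z2‖) < 1 := max_lt hb1 hb2
  have hr : 0 < r := by rw [hrdef]; linarith
  have hr1 : r < 1 := by rw [hrdef]; linarith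
  have hz1r : ‖z1‖ < r := by
    have := le_max_left (‖z1‖) (‖z2‖)
    rw [hrdef]; linarith [max_lt hb1 hb2]
  have hz2r : ‖z2‖ < r := by
    have := le_max_right (‖z1‖) (‖z2‖)
    rw [hrdef]; linarith [max_lt hb1 hb2]
  have hsub : closedBall (0:ℂ) r ⊆ ball (0:ℂ) 1 := closedBall_subset_ball hr1
  -- the image of the r-ball is open
  have hopen : IsOpen (f '' ball (0:ℂ) r) := by
    rw [isOpen_iff_mem_nhds]
    rintro w ⟨a, ha, rfl⟩
    obtain ⟨p, hp⟩ := (fanal hf) a (ball_subset_ball hr1.le ha)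
    have hsd := hp.hasStrictDerivAt
    have hda : deriv f a = (p 1) fun _ => 1 := hsd.hasDerivAt.deriv
    have hne : ((p 1) fun _ => 1) ≠ 0 := by
      rw [← hda]; exact hf' a (ball_subset_ball hr1.le ha)
    have hmap := hsd.map_nhds_eq hne
    rw [← hmap]
    exact Filter.image_mem_map (isOpen_ball.mem_nhds ha)
  have hcompact : IsCompact (f '' closedBall (0:ℂ) r) :=
    (isCompact_closedBall (0:ℂ) r).image_of_continuousOn (hf.continuousOn.mono hsub)
  set γ : ℝ → ℂ := fun t => (1 - t) • f z1 + t • f z2 with hγdef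
  have hγcont : Continuous γ := by
    apply Continuous.add
    · exact (continuous_const.sub continuous_id).smul continuous_const
    · exact continuous_id.smul continuous_const
  -- endpoints in f '' ball r
  have hin1 : γ 0 ∈ f '' ball (0:ℂ) r := by
    refine ⟨z1, by simpa [Complex.dist_eq] using hz1r, ?_⟩
    simp [hγdef]
  have hin2 : γ 1 ∈ f '' ball (0:ℂ) r := by
    refine ⟨z2, by simpa [Complex.dist_eq] using hz2r, ?_⟩
    simp [hγdef]
  -- key claim: γ t ∈ f '' ball r for all t ∈ [0,1]
  have hclaim : ∀ s ∈ Icc (0:ℝ) 1, γ s ∈ f '' ball (0:ℂ) r := by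
    by_contra hcon
    push_neg at hcon
    set A := {s : ℝ | s ∈ Icc (0:ℝ) 1 ∧ γ s ∉ f '' ball (0:ℂ) r} with hA
    have hAne : A.Nonempty := by
      obtain ⟨s, hs1, hs2⟩ := hcon
      exact ⟨s, hs1, hs2⟩
    have hAclosed : IsClosed A := by
      apply IsClosed.inter isClosed_Icc
      exact (hopen.preimage hγcont).isClosed_compl
    have hAbdd : BddBelow A := ⟨0, fun s hs => hs.1.1⟩
    set t0 := sInf A with ht0
    have ht0A : t0 ∈ A := hAclosed.csInf_mem hAne hAbdd
    have ht0pos : 0 < t0 := by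
      rcases eq_or_lt_of_le ht0A.1.1 with h0 | h0
      · exfalso; exact ht0A.2 (h0 ▸ hin1)
      · exact h0
    -- below t0, γ is in the image
    have hbelow : ∀ s, 0 ≤ s → s < t0 → γ s ∈ f '' ball (0:ℂ) r := by
      intro s hs0 hst
      by_contra hcontra
      have : s ∈ A := ⟨⟨hs0, le_trans hst.le ht0A.1.2⟩, hcontra⟩
      exact absurd (csInf_le hAbdd this) (not_le.mpr hst)
    -- γ t0 is in the closure of the open image
    have hclos : γ t0 ∈ closure (f '' ball (0:ℂ) r) := by
      have htend : Filter.Tendsto γ (nhdsWithin t0 (Iio t0)) (nhds (γ t0)) :=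
        (hγcont.tendsto t0).mono_left nhdsWithin_le_nhds
      apply mem_closure_of_tendsto htend
      have hIoo : Ioo (0:ℝ) t0 ∈ nhdsWithin t0 (Iio t0) :=
        Ioo_mem_nhdsLT_of_mem ⟨ht0pos, le_rfl⟩
      filter_upwards [hIoo] with s hs
      exact hbelow s hs.1.le hs.2
    have hclos2 : γ t0 ∈ f '' closedBall (0:ℂ) r := by
      apply closure_minimal (image_mono ball_subset_closedBall) hcompact.isClosed hclos
    obtain ⟨zs, hzs, hγzs⟩ := hclos2
    have hzsr : ‖zs‖ = r := by
      rcases lt_or_eq_of_le (by simpa [Complex.dist_eq] using hzs : ‖zs‖ ≤ r)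
        with hlt | heq
      · exfalso
        apply ht0A.2
        exact ⟨zs, by simpa [Complex.dist_eq] using hlt, hγzs⟩
      · exact heq
    -- zs is on the circle; apply support lemma
    have hzsc : circleMap 0 r (Complex.arg zs) = zs := by
      rw [circleMap_zero, ← hzsr]
      exact Complex.norm_mul_exp_arg_mul_I zs
    set E := Complex.exp (-((Tf f r (Complex.arg zs) : ℝ) : ℂ) * Complex.I) with hE
    have hk1 := interior_support hf hf' hr hr1 hq (Complex.arg zs) hz1r
    have hk2 := interior_support hf hf' hr hr1 hq (Complex.arg zs) hz2r
    rw [hzsc] at hk1 hk2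
    rw [← hE] at hk1 hk2
    have haffine : (E * (γ t0 - f zs)).re
        = (1 - t0) * (E * (f z1 - f zs)).re + t0 * (E * (f z2 - f zs)).re := by
      have : E * (γ t0 - f zs)
          = ((1 - t0 : ℝ) : ℂ) * (E * (f z1 - f zs)) + ((t0 : ℝ) : ℂ) * (E * (f z2 - f zs)) := by
        rw [hγdef]
        simp only [Complex.real_smul]
        push_cast
        ring
      rw [this]
      simp [Complex.add_re, Complex.re_ofReal_mul]
    have ht01 : t0 ≤ 1 := ht0A.1.2
    have hneg : (E * (γ t0 - f zs)).re < 0 := by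
      rw [haffine]
      rcases eq_or_lt_of_le ht01 with h1 | h1
      · rw [h1]; linarith [hk2]
      · have h2 : 0 < 1 - t0 := by linarith
        nlinarith
    rw [hγzs] at hneg
    simp at hneg
  have := hclaim t ht
  exact image_mono (ball_subset_ball hr1.le) this

end Main

end KimMinda

/-- If `f` is holomorphic with nonvanishing derivative on the unit disk and
`(1-|z|²)²|Sf(z)| + 2|p(z)|² ≤ 2` on the disk, then `f` is injective with convex image. -/
theorem kim_minda_inequality_implies_convex_mapping
    (f : ℂ → ℂ)
    (hf : DifferentiableOn ℂ f (ball (0 : ℂ) 1))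
    (hf' : ∀ z ∈ ball (0 : ℂ) 1, deriv f z ≠ 0)
    (hineq : ∀ z ∈ ball (0 : ℂ) 1,
      (1 - ‖z‖ ^ 2) ^ 2 * ‖schwarzian f z‖ +
        2 * ‖pFun f z‖ ^ 2 ≤ 2) :
    InjOn f (ball (0 : ℂ) 1) ∧ Convex ℝ (f '' ball (0 : ℂ) 1) := by
  have hq : ∀ z ∈ ball (0 : ℂ) 1, 0 < 1 + (z * KimMinda.gf f z).re :=
    KimMinda.re_q_pos f hineq
  exact ⟨KimMinda.injOn_ball hf hf' hq, KimMinda.convex_image hf hf' hq⟩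
end

section
/- Let F(z) = log((1 + z)/(1 − z)) on the unit disk 𝔻 = {z ∈ ℂ : |z| < 1}, taking the principal branch of the logarithm (a conformal map of 𝔻 onto the parallel strip {w : |Im w| < π/2}). Then equality holds everywhere in the convexity inequality: for all z ∈ 𝔻, Re(1 + z·F''(z)/F'(z)) = (1/4)(1 − |z|²)·(2|SF(z)| + |F''(z)/F'(z)|²), where SF(z) = 2/(1 − z²)². -/
open Complex Metric Set

lemma hsub (z : ℂ) (hz : z ∈ ball (0:ℂ) 1) : (1 - z) ≠ 0 := by
  intro h
  have h1 : ‖z‖ < 1 := by simpa using hz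
  have : z = 1 := by linear_combination -h
  rw [this] at h1; simp at h1

lemma hadd (z : ℂ) (hz : z ∈ ball (0:ℂ) 1) : (1 + z) ≠ 0 := by
  intro h
  have h1 : ‖z‖ < 1 := by simpa using hz
  have : z = -1 := by linear_combination h
  rw [this] at h1; simp at h1

lemma hsq (z : ℂ) (hz : z ∈ ball (0:ℂ) 1) : (1 - z^2) ≠ 0 := by
  have : (1 - z^2) = (1 - z) * (1 + z) := by ring
  rw [this]
  exact mul_ne_zero (hsub z hz) (hadd z hz)

lemma hslit (z : ℂ) (hz : z ∈ ball (0:ℂ) 1) : (1 + z) / (1 - z) ∈ Complex.slitPlane := by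
  rw [Complex.mem_slitPlane_iff]
  left
  rw [Complex.div_re]
  have h1 : ‖z‖ < 1 := by simpa using hz
  have h2 : Complex.normSq z < 1 := by
    rw [← Complex.sq_norm] at *; nlinarith [norm_nonneg z]
  have h3 : 0 < Complex.normSq (1 - z) := by
    rw [Complex.normSq_pos]; exact hsub z hz
  rw [← add_div]
  apply div_pos _ h3
  simp [Complex.normSq_apply, Complex.add_re, Complex.sub_re, Complex.add_im, Complex.sub_im] at h2 ⊢
  nlinarith

lemma hF' (z : ℂ) (hz : z ∈ ball (0:ℂ) 1) :
    HasDerivAt (fun w : ℂ => Complex.log ((1 + w) / (1 - w))) (2 / (1 - z^2)) z := by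
  have h1 : HasDerivAt (fun w : ℂ => 1 + w) 1 z := by
    simpa using (hasDerivAt_id z).const_add 1
  have h2 : HasDerivAt (fun w : ℂ => 1 - w) (-1) z := by
    simpa using (hasDerivAt_id z).const_sub 1
  have hg : HasDerivAt (fun w : ℂ => (1 + w) / (1 - w))
      ((1 * (1 - z) - (1 + z) * (-1)) / (1 - z)^2) z := h1.div h2 (hsub z hz)
  have hF := hg.clog (hslit z hz)
  convert hF using 1
  have h3 := hsub z hz
  have h4 := hadd z hz
  have h5 := hsq z hz
  field_simp
  ring

lemma deriv_F_eq (z : ℂ) (hz : z ∈ ball (0:ℂ) 1) :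
    deriv (fun w : ℂ => Complex.log ((1 + w) / (1 - w))) z = 2 / (1 - z^2) :=
  (hF' z hz).deriv

lemma deriv_F_eventually (z : ℂ) (hz : z ∈ ball (0:ℂ) 1) :
    deriv (fun w : ℂ => Complex.log ((1 + w) / (1 - w))) =ᶠ[nhds z]
      (fun w => 2 / (1 - w^2)) :=
  Filter.eventually_of_mem (isOpen_ball.mem_nhds hz) (fun w hw => deriv_F_eq w hw)

lemma hQ' (z : ℂ) (hz : z ∈ ball (0:ℂ) 1) :
    HasDerivAt (fun w : ℂ => 2 / (1 - w^2)) (4 * z / (1 - z^2)^2) z := by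
  have h2 : HasDerivAt (fun w : ℂ => 1 - w^2) (-(2*z)) z := by
    simpa using ((hasDerivAt_pow 2 z).const_sub 1)
  have := (hasDerivAt_const z (2:ℂ)).div h2 (hsq z hz)
  rw [show 4 * z / (1 - z ^ 2) ^ 2 = (0 * (1 - z ^ 2) - 2 * -(2 * z)) / (1 - z ^ 2) ^ 2 by ring]
  exact this

lemma deriv2_F_eq (z : ℂ) (hz : z ∈ ball (0:ℂ) 1) :
    deriv (deriv (fun w : ℂ => Complex.log ((1 + w) / (1 - w)))) z = 4 * z / (1 - z^2)^2 := by
  rw [(deriv_F_eventually z hz).deriv_eq]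
  exact (hQ' z hz).deriv

lemma ratio_eq (z : ℂ) (hz : z ∈ ball (0:ℂ) 1) :
    deriv (deriv (fun w : ℂ => Complex.log ((1 + w) / (1 - w)))) z /
      deriv (fun w : ℂ => Complex.log ((1 + w) / (1 - w))) z = 2 * z / (1 - z^2) := by
  rw [deriv2_F_eq z hz, deriv_F_eq z hz]
  have h5 := hsq z hz
  field_simp
  ring

lemma deriv_ratio_eq (z : ℂ) (hz : z ∈ ball (0:ℂ) 1) :
    deriv (fun w => deriv (deriv (fun w : ℂ => Complex.log ((1 + w) / (1 - w)))) w /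
      deriv (fun w : ℂ => Complex.log ((1 + w) / (1 - w))) w) z
      = (2 + 2 * z^2) / (1 - z^2)^2 := by
  have hev : (fun w => deriv (deriv (fun w : ℂ => Complex.log ((1 + w) / (1 - w)))) w /
      deriv (fun w : ℂ => Complex.log ((1 + w) / (1 - w))) w) =ᶠ[nhds z]
      (fun w => 2 * w / (1 - w^2)) :=
    Filter.eventually_of_mem (isOpen_ball.mem_nhds hz) (fun w hw => ratio_eq w hw)
  rw [hev.deriv_eq]
  have h1 : HasDerivAt (fun w : ℂ => 2 * w) 2 z := by
    simpa using (hasDerivAt_id z).const_mul (2:ℂ)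
  have h2 : HasDerivAt (fun w : ℂ => 1 - w^2) (-(2*z)) z := by
    simpa using ((hasDerivAt_pow 2 z).const_sub 1)
  have := h1.div h2 (hsq z hz)
  show deriv ((fun w : ℂ => 2 * w) / fun w => 1 - w ^ 2) z = _
  rw [this.deriv]
  have h5 := hsq z hz
  field_simp
  ring


lemma schwarzian_eq (z : ℂ) (hz : z ∈ ball (0:ℂ) 1) :
    schwarzian (fun w : ℂ => Complex.log ((1 + w) / (1 - w))) z = 2 / (1 - z ^ 2) ^ 2 := by
  rw [schwarzian, deriv_ratio_eq z hz, ratio_eq z hz]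
  have h5 := hsq z hz
  field_simp
  ring


/-- For the strip mapping `F(z) = log((1+z)/(1-z))` (principal branch), the Schwarzian
is `SF(z) = 2/(1-z²)²` and equality holds everywhere in the convexity inequality
`Re(1 + z F''/F') = (1/4)(1-|z|²)(2|SF| + |F''/F'|²)`. -/
theorem strip_map_equality :
    ∀ z ∈ ball (0 : ℂ) 1,
      schwarzian (fun w : ℂ => Complex.log ((1 + w) / (1 - w))) z = 2 / (1 - z ^ 2) ^ 2 ∧
      (1 + z * (deriv (deriv (fun w : ℂ => Complex.log ((1 + w) / (1 - w)))) z /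
          deriv (fun w : ℂ => Complex.log ((1 + w) / (1 - w))) z)).re =
        (1 / 4) * (1 - ‖z‖ ^ 2) *
          (2 * ‖schwarzian (fun w : ℂ => Complex.log ((1 + w) / (1 - w))) z‖ +
            ‖deriv (deriv (fun w : ℂ => Complex.log ((1 + w) / (1 - w)))) z /
              deriv (fun w : ℂ => Complex.log ((1 + w) / (1 - w))) z‖ ^ 2) := by
  intro z hz
  have h5 := hsq z hz
  refine ⟨schwarzian_eq z hz, ?_⟩
  rw [schwarzian_eq z hz, ratio_eq z hz]
  have hL : 1 + z * (2 * z / (1 - z^2)) = (1 + z^2) / (1 - z^2) := by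
    field_simp; ring
  rw [hL]
  have hb0 : (0:ℝ) < ‖1 - z^2‖ := norm_pos_iff.mpr h5
  set a := ‖z‖ with ha
  set b := ‖1 - z^2‖ with hbdef
  have habs1 : ‖2 / (1 - z^2)^2‖ = 2 / b^2 := by
    rw [norm_div, norm_pow]
    norm_num
    rfl
  have habs2 : ‖2 * z / (1 - z^2)‖ = 2 * a / b := by
    rw [norm_div, norm_mul]
    norm_num
    rfl
  rw [habs1, habs2]
  have hkey : ((1 + z^2) / (1 - z^2)).re = (1 - a^2 * a^2) / b^2 := by
    rw [Complex.div_re, ← add_div, ← Complex.sq_norm (1 - z^2), ← hbdef]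
    congr 1
    have hn : (z^2).re^2 + (z^2).im^2 = a^2 * a^2 := by
      have := Complex.sq_norm (z^2)
      rw [norm_pow] at this
      rw [← ha] at this
      rw [Complex.normSq_apply] at this
      nlinarith
    simp only [Complex.add_re, Complex.sub_re, Complex.add_im, Complex.sub_im,
      Complex.one_re, Complex.one_im]
    nlinarith
  rw [hkey]
  field_simp
  ring
end
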